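/- arXiv:0812.3278 — 4 statements merged into one kernel-verified Lean document; each statement's English description precedes it below -/
import Mathlib

section
/- Let a, b, c, d, e, f be nonnegative integers and suppose that s := ((a+c-e)+2(b+d-f))/3 and t := ((a+c-e)-(b+d-f))/3 are integers. Let J be the set of integers j satisfying: 0 ≤ j, j ≤ s+t, s+t ≤ c+d, 0 ≤ s-j, s-j ≤ d, s+t-j ≤ a, j ≤ b, j ≤ b+t, j ≤ c-t, and j ≤ c. If t ≥ 0, the linear maps (π_{e,f} ∘ μ_e ∘ θ^t ∘ μ_x ∘ β^j ∘ α^{s-j})|_{V(a,b)⊗V(c,d)} : V(a,b)⊗V(c,d) → V(e,f), for j ∈ J, are linearly independent over ℂ; if t ≤ 0, the maps (π_{e,f} ∘ μ_x ∘ ω^{-t} ∘ μ_e ∘ β^j ∘ α^{s+t-j})|_{V(a,b)⊗V(c,d)}, for j ∈ J, are linearly independent over ℂ. -/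
open MvPolynomial

noncomputable section

/-- The polynomial ring `R₂ = ℂ[e₁,e₂,e₃,x₁,x₂,x₃,e₁',e₂',e₃',x₁',x₂',x₃']`:
variables `0,1,2` are `e₁,e₂,e₃`; `3,4,5` are `x₁,x₂,x₃`; `6,7,8` are `e₁',e₂',e₃'`;
`9,10,11` are `x₁',x₂',x₃'`. -/
abbrev R12 : Type := MvPolynomial (Fin 12) ℂ

/-- the variable `eᵢ` -/
def ev (i : Fin 3) : Fin 12 := ⟨i.val, by omega⟩

/-- the variable `xᵢ` -/
def xv (i : Fin 3) : Fin 12 := ⟨i.val + 3, by omega⟩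

/-- the variable `eᵢ'` -/
def ep (i : Fin 3) : Fin 12 := ⟨i.val + 6, by omega⟩

/-- the variable `xᵢ'` -/
def xp (i : Fin 3) : Fin 12 := ⟨i.val + 9, by omega⟩

/-- `α = Σᵢ (∂/∂eᵢ)∘(∂/∂xᵢ')` -/
def α : Module.End ℂ R12 :=
  ∑ i : Fin 3, (pderiv (ev i)).toLinearMap ∘ₗ (pderiv (xp i)).toLinearMap

/-- `β = Σᵢ (∂/∂xᵢ)∘(∂/∂eᵢ')` -/
def β : Module.End ℂ R12 :=
  ∑ i : Fin 3, (pderiv (xv i)).toLinearMap ∘ₗ (pderiv (ep i)).toLinearMap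

/-- `θ = Σ_{σ∈S₃} sgn(σ)·(∂/∂e_{σ(1)})∘(∂/∂e'_{σ(2)})∘(mult. by x_{σ(3)})` -/
def θ : Module.End ℂ R12 :=
  ∑ σ : Equiv.Perm (Fin 3), ((Equiv.Perm.sign σ : ℤ) : ℂ) •
    ((pderiv (ev (σ 0))).toLinearMap ∘ₗ (pderiv (ep (σ 1))).toLinearMap ∘ₗ
      LinearMap.mulLeft ℂ (X (xv (σ 2))))

/-- `ω = Σ_{σ∈S₃} sgn(σ)·(mult. by e_{σ(1)})∘(∂/∂x_{σ(2)})∘(∂/∂x'_{σ(3)})` -/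
def ω : Module.End ℂ R12 :=
  ∑ σ : Equiv.Perm (Fin 3), ((Equiv.Perm.sign σ : ℤ) : ℂ) •
    (LinearMap.mulLeft ℂ (X (ev (σ 0))) ∘ₗ (pderiv (xv (σ 1))).toLinearMap ∘ₗ
      (pderiv (xp (σ 2))).toLinearMap)

/-- `μ_e` : the algebra homomorphism substituting `eᵢ' := eᵢ` and fixing all other variables -/
def μe : R12 →ₐ[ℂ] R12 :=
  aeval (fun k : Fin 12 =>
    if h : 6 ≤ k.val ∧ k.val < 9 then X (⟨k.val - 6, by omega⟩ : Fin 12) else X k)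

/-- `μ_x` : the algebra homomorphism substituting `xᵢ' := xᵢ` and fixing all other variables -/
def μx : R12 →ₐ[ℂ] R12 :=
  aeval (fun k : Fin 12 =>
    if h : 9 ≤ k.val then X (⟨k.val - 6, by have := k.isLt; omega⟩ : Fin 12) else X k)

/-- weight recording the total degree in the `e`-variables -/
def wE : Fin 12 → ℕ := fun i => if i.val < 3 then 1 else 0

/-- weight recording the total degree in the `x`-variables -/
def wX : Fin 12 → ℕ := fun i => if 3 ≤ i.val ∧ i.val < 6 then 1 else 0

/-- weight recording the total degree in the `e'`-variables -/
def wEp : Fin 12 → ℕ := fun i => if 6 ≤ i.val ∧ i.val < 9 then 1 else 0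

/-- weight recording the total degree in the `x'`-variables -/
def wXp : Fin 12 → ℕ := fun i => if 9 ≤ i.val then 1 else 0

/-- polynomials of multidegree `(a,b,c,d)` in the variable groups `(e,x,e',x')` -/
def SD4 (a b c d : ℕ) : Submodule ℂ R12 :=
  weightedHomogeneousSubmodule ℂ wE a ⊓ weightedHomogeneousSubmodule ℂ wX b ⊓
  weightedHomogeneousSubmodule ℂ wEp c ⊓ weightedHomogeneousSubmodule ℂ wXp d

/-- `S^eD^f`, realized inside `R₂` as the polynomials of multidegree `(e,f,0,0)` -/
def SD2 (e f : ℕ) : Submodule ℂ R12 := SD4 e f 0 0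

/-- `Δ = Σᵢ (∂/∂eᵢ)∘(∂/∂xᵢ)` on `R₂` (unprimed variables) -/
def Δ₂ : Module.End ℂ R12 :=
  ∑ i : Fin 3, (pderiv (ev i)).toLinearMap ∘ₗ (pderiv (xv i)).toLinearMap

/-- `Δ' = Σᵢ (∂/∂eᵢ')∘(∂/∂xᵢ')` on `R₂` (primed variables) -/
def Δ₂' : Module.End ℂ R12 :=
  ∑ i : Fin 3, (pderiv (ep i)).toLinearMap ∘ₗ (pderiv (xp i)).toLinearMap

/-- `δ` = multiplication by `e₁x₁+e₂x₂+e₃x₃`, acting on the copy of `R` inside `R₂` -/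
def δ₂ : Module.End ℂ R12 :=
  LinearMap.mulLeft ℂ (∑ i : Fin 3, X (ev i) * X (xv i))

/-- `V(a,b)⊗V(c,d)`, realized inside `R₂` as the polynomials of multidegree `(a,b,c,d)` in the
variable groups `(e,x,e',x')` annihilated by `Δ` and `Δ'`. -/
def VV (a b c d : ℕ) : Submodule ℂ R12 :=
  SD4 a b c d ⊓ LinearMap.ker Δ₂ ⊓ LinearMap.ker Δ₂'

/-- `V(e,f) = ker Δ ∩ S^eD^f`, realized inside `R₂` -/
def V2 (e f : ℕ) : Submodule ℂ R12 := LinearMap.ker Δ₂ ⊓ SD2 e f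

/-- `S^{e-1}D^{f-1}`, interpreted as `0` when `e = 0` or `f = 0` -/
def SDsub2 (e f : ℕ) : Submodule ℂ R12 :=
  if e = 0 ∨ f = 0 then ⊥ else SD2 (e - 1) (f - 1)

/-- the inequalities defining the index set `J` of Theorem 3.1 -/
def Jcond (a b c d : ℕ) (s t j : ℤ) : Prop :=
  0 ≤ j ∧ j ≤ s + t ∧ s + t ≤ (c : ℤ) + d ∧ 0 ≤ s - j ∧ s - j ≤ (d : ℤ) ∧
  s + t - j ≤ (a : ℤ) ∧ j ≤ (b : ℤ) ∧ j ≤ (b : ℤ) + t ∧ j ≤ (c : ℤ) - t ∧ j ≤ (c : ℤ)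

/-- the composite map `π_{e,f} ∘ μ_e ∘ θ^t ∘ μ_x ∘ β^j ∘ α^{s-j}` (case `t ≥ 0`) -/
def famθ (π : Module.End ℂ R12) (s t j : ℤ) : Module.End ℂ R12 :=
  π ∘ₗ μe.toLinearMap ∘ₗ (θ ^ t.toNat) ∘ₗ μx.toLinearMap ∘ₗ
    (β ^ j.toNat) ∘ₗ (α ^ (s - j).toNat)

/-- the composite map `π_{e,f} ∘ μ_x ∘ ω^{-t} ∘ μ_e ∘ β^j ∘ α^{s+t-j}` (case `t ≤ 0`) -/
def famω (π : Module.End ℂ R12) (s t j : ℤ) : Module.End ℂ R12 :=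
  π ∘ₗ μx.toLinearMap ∘ₗ (ω ^ (-t).toNat) ∘ₗ μe.toLinearMap ∘ₗ
    (β ^ j.toNat) ∘ₗ (α ^ (s + t - j).toNat)

def Mono (g : Fin 12 → ℕ) (c : ℂ) : R12 := monomial (Finsupp.equivFunOnFinite.symm g) c

theorem pderiv_Mono (g : Fin 12 → ℕ) (j : Fin 12) (c : ℂ) :
    pderiv j (Mono g c) = Mono (Function.update g j (g j - 1)) (c * g j) := by
  have h : Finsupp.equivFunOnFinite.symm g - Finsupp.single j 1
      = Finsupp.equivFunOnFinite.symm (Function.update g j (g j - 1)) := by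
    ext i
    by_cases h : j = i
    · simp [h, Function.update_apply, Finsupp.single_apply]
    · simp [h, Function.update_apply, Finsupp.single_apply, Ne.symm h]
  rw [Mono, Mono, pderiv_monomial, h]
  rfl

theorem Xmul_Mono (g : Fin 12 → ℕ) (j : Fin 12) (c : ℂ) :
    X j * Mono g c = Mono (Function.update g j (g j + 1)) c := by
  have h : Finsupp.single j 1 + Finsupp.equivFunOnFinite.symm g
      = Finsupp.equivFunOnFinite.symm (Function.update g j (g j + 1)) := by
    ext i
    by_cases h : j = i
    · simp [h, Function.update_apply, add_comm]
    · simp [h, Function.update_apply, Finsupp.single_apply, Ne.symm h]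
  rw [Mono, Mono, X, monomial_mul, one_mul, h]

theorem Mono_zero (g : Fin 12 → ℕ) : Mono g 0 = 0 := by simp [Mono]

theorem smul_Mono (g : Fin 12 → ℕ) (c d : ℂ) : c • Mono g d = Mono g (c * d) := by
  rw [Mono, Mono, smul_monomial, smul_eq_mul]

theorem coeff_Mono (g h : Fin 12 → ℕ) (c : ℂ) :
    coeff (Finsupp.equivFunOnFinite.symm h) (Mono g c) = if g = h then c else 0 := by
  rw [Mono, coeff_monomial]
  congr 1
  simp [Finsupp.ext_iff, funext_iff]

def gv (e0 e1 e2 x0 x1 x2 f0 f1 f2 y0 y1 y2 : ℕ) : Fin 12 → ℕ :=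
  fun i =>
    if i.val = 0 then e0 else if i.val = 1 then e1 else if i.val = 2 then e2 else
    if i.val = 3 then x0 else if i.val = 4 then x1 else if i.val = 5 then x2 else
    if i.val = 6 then f0 else if i.val = 7 then f1 else if i.val = 8 then f2 else
    if i.val = 9 then y0 else if i.val = 10 then y1 else y2


theorem pdM0 (e0 e1 e2 x0 x1 x2 f0 f1 f2 y0 y1 y2 : ℕ) (c : ℂ) :
    pderiv (0 : Fin 12) (Mono (gv e0 e1 e2 x0 x1 x2 f0 f1 f2 y0 y1 y2) c) = Mono (gv (e0 - 1) e1 e2 x0 x1 x2 f0 f1 f2 y0 y1 y2) (c * e0) := by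
  rw [pderiv_Mono, show Function.update (gv e0 e1 e2 x0 x1 x2 f0 f1 f2 y0 y1 y2) (0 : Fin 12)
      (gv e0 e1 e2 x0 x1 x2 f0 f1 f2 y0 y1 y2 (0 : Fin 12) - 1) = gv (e0 - 1) e1 e2 x0 x1 x2 f0 f1 f2 y0 y1 y2 from by ext i; fin_cases i <;> rfl]
  rfl

theorem XmulM0 (e0 e1 e2 x0 x1 x2 f0 f1 f2 y0 y1 y2 : ℕ) (c : ℂ) :
    X (0 : Fin 12) * Mono (gv e0 e1 e2 x0 x1 x2 f0 f1 f2 y0 y1 y2) c = Mono (gv (e0 + 1) e1 e2 x0 x1 x2 f0 f1 f2 y0 y1 y2) c := by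
  rw [Xmul_Mono, show Function.update (gv e0 e1 e2 x0 x1 x2 f0 f1 f2 y0 y1 y2) (0 : Fin 12)
      (gv e0 e1 e2 x0 x1 x2 f0 f1 f2 y0 y1 y2 (0 : Fin 12) + 1) = gv (e0 + 1) e1 e2 x0 x1 x2 f0 f1 f2 y0 y1 y2 from by ext i; fin_cases i <;> rfl]

theorem pdM1 (e0 e1 e2 x0 x1 x2 f0 f1 f2 y0 y1 y2 : ℕ) (c : ℂ) :
    pderiv (1 : Fin 12) (Mono (gv e0 e1 e2 x0 x1 x2 f0 f1 f2 y0 y1 y2) c) = Mono (gv e0 (e1 - 1) e2 x0 x1 x2 f0 f1 f2 y0 y1 y2) (c * e1) := by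
  rw [pderiv_Mono, show Function.update (gv e0 e1 e2 x0 x1 x2 f0 f1 f2 y0 y1 y2) (1 : Fin 12)
      (gv e0 e1 e2 x0 x1 x2 f0 f1 f2 y0 y1 y2 (1 : Fin 12) - 1) = gv e0 (e1 - 1) e2 x0 x1 x2 f0 f1 f2 y0 y1 y2 from by ext i; fin_cases i <;> rfl]
  rfl

theorem XmulM1 (e0 e1 e2 x0 x1 x2 f0 f1 f2 y0 y1 y2 : ℕ) (c : ℂ) :
    X (1 : Fin 12) * Mono (gv e0 e1 e2 x0 x1 x2 f0 f1 f2 y0 y1 y2) c = Mono (gv e0 (e1 + 1) e2 x0 x1 x2 f0 f1 f2 y0 y1 y2) c := by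
  rw [Xmul_Mono, show Function.update (gv e0 e1 e2 x0 x1 x2 f0 f1 f2 y0 y1 y2) (1 : Fin 12)
      (gv e0 e1 e2 x0 x1 x2 f0 f1 f2 y0 y1 y2 (1 : Fin 12) + 1) = gv e0 (e1 + 1) e2 x0 x1 x2 f0 f1 f2 y0 y1 y2 from by ext i; fin_cases i <;> rfl]

theorem pdM2 (e0 e1 e2 x0 x1 x2 f0 f1 f2 y0 y1 y2 : ℕ) (c : ℂ) :
    pderiv (2 : Fin 12) (Mono (gv e0 e1 e2 x0 x1 x2 f0 f1 f2 y0 y1 y2) c) = Mono (gv e0 e1 (e2 - 1) x0 x1 x2 f0 f1 f2 y0 y1 y2) (c * e2) := by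
  rw [pderiv_Mono, show Function.update (gv e0 e1 e2 x0 x1 x2 f0 f1 f2 y0 y1 y2) (2 : Fin 12)
      (gv e0 e1 e2 x0 x1 x2 f0 f1 f2 y0 y1 y2 (2 : Fin 12) - 1) = gv e0 e1 (e2 - 1) x0 x1 x2 f0 f1 f2 y0 y1 y2 from by ext i; fin_cases i <;> rfl]
  rfl

theorem XmulM2 (e0 e1 e2 x0 x1 x2 f0 f1 f2 y0 y1 y2 : ℕ) (c : ℂ) :
    X (2 : Fin 12) * Mono (gv e0 e1 e2 x0 x1 x2 f0 f1 f2 y0 y1 y2) c = Mono (gv e0 e1 (e2 + 1) x0 x1 x2 f0 f1 f2 y0 y1 y2) c := by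
  rw [Xmul_Mono, show Function.update (gv e0 e1 e2 x0 x1 x2 f0 f1 f2 y0 y1 y2) (2 : Fin 12)
      (gv e0 e1 e2 x0 x1 x2 f0 f1 f2 y0 y1 y2 (2 : Fin 12) + 1) = gv e0 e1 (e2 + 1) x0 x1 x2 f0 f1 f2 y0 y1 y2 from by ext i; fin_cases i <;> rfl]

theorem pdM3 (e0 e1 e2 x0 x1 x2 f0 f1 f2 y0 y1 y2 : ℕ) (c : ℂ) :
    pderiv (3 : Fin 12) (Mono (gv e0 e1 e2 x0 x1 x2 f0 f1 f2 y0 y1 y2) c) = Mono (gv e0 e1 e2 (x0 - 1) x1 x2 f0 f1 f2 y0 y1 y2) (c * x0) := by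
  rw [pderiv_Mono, show Function.update (gv e0 e1 e2 x0 x1 x2 f0 f1 f2 y0 y1 y2) (3 : Fin 12)
      (gv e0 e1 e2 x0 x1 x2 f0 f1 f2 y0 y1 y2 (3 : Fin 12) - 1) = gv e0 e1 e2 (x0 - 1) x1 x2 f0 f1 f2 y0 y1 y2 from by ext i; fin_cases i <;> rfl]
  rfl

theorem XmulM3 (e0 e1 e2 x0 x1 x2 f0 f1 f2 y0 y1 y2 : ℕ) (c : ℂ) :
    X (3 : Fin 12) * Mono (gv e0 e1 e2 x0 x1 x2 f0 f1 f2 y0 y1 y2) c = Mono (gv e0 e1 e2 (x0 + 1) x1 x2 f0 f1 f2 y0 y1 y2) c := by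
  rw [Xmul_Mono, show Function.update (gv e0 e1 e2 x0 x1 x2 f0 f1 f2 y0 y1 y2) (3 : Fin 12)
      (gv e0 e1 e2 x0 x1 x2 f0 f1 f2 y0 y1 y2 (3 : Fin 12) + 1) = gv e0 e1 e2 (x0 + 1) x1 x2 f0 f1 f2 y0 y1 y2 from by ext i; fin_cases i <;> rfl]

theorem pdM4 (e0 e1 e2 x0 x1 x2 f0 f1 f2 y0 y1 y2 : ℕ) (c : ℂ) :
    pderiv (4 : Fin 12) (Mono (gv e0 e1 e2 x0 x1 x2 f0 f1 f2 y0 y1 y2) c) = Mono (gv e0 e1 e2 x0 (x1 - 1) x2 f0 f1 f2 y0 y1 y2) (c * x1) := by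
  rw [pderiv_Mono, show Function.update (gv e0 e1 e2 x0 x1 x2 f0 f1 f2 y0 y1 y2) (4 : Fin 12)
      (gv e0 e1 e2 x0 x1 x2 f0 f1 f2 y0 y1 y2 (4 : Fin 12) - 1) = gv e0 e1 e2 x0 (x1 - 1) x2 f0 f1 f2 y0 y1 y2 from by ext i; fin_cases i <;> rfl]
  rfl

theorem XmulM4 (e0 e1 e2 x0 x1 x2 f0 f1 f2 y0 y1 y2 : ℕ) (c : ℂ) :
    X (4 : Fin 12) * Mono (gv e0 e1 e2 x0 x1 x2 f0 f1 f2 y0 y1 y2) c = Mono (gv e0 e1 e2 x0 (x1 + 1) x2 f0 f1 f2 y0 y1 y2) c := by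
  rw [Xmul_Mono, show Function.update (gv e0 e1 e2 x0 x1 x2 f0 f1 f2 y0 y1 y2) (4 : Fin 12)
      (gv e0 e1 e2 x0 x1 x2 f0 f1 f2 y0 y1 y2 (4 : Fin 12) + 1) = gv e0 e1 e2 x0 (x1 + 1) x2 f0 f1 f2 y0 y1 y2 from by ext i; fin_cases i <;> rfl]

theorem pdM5 (e0 e1 e2 x0 x1 x2 f0 f1 f2 y0 y1 y2 : ℕ) (c : ℂ) :
    pderiv (5 : Fin 12) (Mono (gv e0 e1 e2 x0 x1 x2 f0 f1 f2 y0 y1 y2) c) = Mono (gv e0 e1 e2 x0 x1 (x2 - 1) f0 f1 f2 y0 y1 y2) (c * x2) := by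
  rw [pderiv_Mono, show Function.update (gv e0 e1 e2 x0 x1 x2 f0 f1 f2 y0 y1 y2) (5 : Fin 12)
      (gv e0 e1 e2 x0 x1 x2 f0 f1 f2 y0 y1 y2 (5 : Fin 12) - 1) = gv e0 e1 e2 x0 x1 (x2 - 1) f0 f1 f2 y0 y1 y2 from by ext i; fin_cases i <;> rfl]
  rfl

theorem XmulM5 (e0 e1 e2 x0 x1 x2 f0 f1 f2 y0 y1 y2 : ℕ) (c : ℂ) :
    X (5 : Fin 12) * Mono (gv e0 e1 e2 x0 x1 x2 f0 f1 f2 y0 y1 y2) c = Mono (gv e0 e1 e2 x0 x1 (x2 + 1) f0 f1 f2 y0 y1 y2) c := by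
  rw [Xmul_Mono, show Function.update (gv e0 e1 e2 x0 x1 x2 f0 f1 f2 y0 y1 y2) (5 : Fin 12)
      (gv e0 e1 e2 x0 x1 x2 f0 f1 f2 y0 y1 y2 (5 : Fin 12) + 1) = gv e0 e1 e2 x0 x1 (x2 + 1) f0 f1 f2 y0 y1 y2 from by ext i; fin_cases i <;> rfl]

theorem pdM6 (e0 e1 e2 x0 x1 x2 f0 f1 f2 y0 y1 y2 : ℕ) (c : ℂ) :
    pderiv (6 : Fin 12) (Mono (gv e0 e1 e2 x0 x1 x2 f0 f1 f2 y0 y1 y2) c) = Mono (gv e0 e1 e2 x0 x1 x2 (f0 - 1) f1 f2 y0 y1 y2) (c * f0) := by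
  rw [pderiv_Mono, show Function.update (gv e0 e1 e2 x0 x1 x2 f0 f1 f2 y0 y1 y2) (6 : Fin 12)
      (gv e0 e1 e2 x0 x1 x2 f0 f1 f2 y0 y1 y2 (6 : Fin 12) - 1) = gv e0 e1 e2 x0 x1 x2 (f0 - 1) f1 f2 y0 y1 y2 from by ext i; fin_cases i <;> rfl]
  rfl

theorem XmulM6 (e0 e1 e2 x0 x1 x2 f0 f1 f2 y0 y1 y2 : ℕ) (c : ℂ) :
    X (6 : Fin 12) * Mono (gv e0 e1 e2 x0 x1 x2 f0 f1 f2 y0 y1 y2) c = Mono (gv e0 e1 e2 x0 x1 x2 (f0 + 1) f1 f2 y0 y1 y2) c := by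
  rw [Xmul_Mono, show Function.update (gv e0 e1 e2 x0 x1 x2 f0 f1 f2 y0 y1 y2) (6 : Fin 12)
      (gv e0 e1 e2 x0 x1 x2 f0 f1 f2 y0 y1 y2 (6 : Fin 12) + 1) = gv e0 e1 e2 x0 x1 x2 (f0 + 1) f1 f2 y0 y1 y2 from by ext i; fin_cases i <;> rfl]

theorem pdM7 (e0 e1 e2 x0 x1 x2 f0 f1 f2 y0 y1 y2 : ℕ) (c : ℂ) :
    pderiv (7 : Fin 12) (Mono (gv e0 e1 e2 x0 x1 x2 f0 f1 f2 y0 y1 y2) c) = Mono (gv e0 e1 e2 x0 x1 x2 f0 (f1 - 1) f2 y0 y1 y2) (c * f1) := by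
  rw [pderiv_Mono, show Function.update (gv e0 e1 e2 x0 x1 x2 f0 f1 f2 y0 y1 y2) (7 : Fin 12)
      (gv e0 e1 e2 x0 x1 x2 f0 f1 f2 y0 y1 y2 (7 : Fin 12) - 1) = gv e0 e1 e2 x0 x1 x2 f0 (f1 - 1) f2 y0 y1 y2 from by ext i; fin_cases i <;> rfl]
  rfl

theorem XmulM7 (e0 e1 e2 x0 x1 x2 f0 f1 f2 y0 y1 y2 : ℕ) (c : ℂ) :
    X (7 : Fin 12) * Mono (gv e0 e1 e2 x0 x1 x2 f0 f1 f2 y0 y1 y2) c = Mono (gv e0 e1 e2 x0 x1 x2 f0 (f1 + 1) f2 y0 y1 y2) c := by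
  rw [Xmul_Mono, show Function.update (gv e0 e1 e2 x0 x1 x2 f0 f1 f2 y0 y1 y2) (7 : Fin 12)
      (gv e0 e1 e2 x0 x1 x2 f0 f1 f2 y0 y1 y2 (7 : Fin 12) + 1) = gv e0 e1 e2 x0 x1 x2 f0 (f1 + 1) f2 y0 y1 y2 from by ext i; fin_cases i <;> rfl]

theorem pdM8 (e0 e1 e2 x0 x1 x2 f0 f1 f2 y0 y1 y2 : ℕ) (c : ℂ) :
    pderiv (8 : Fin 12) (Mono (gv e0 e1 e2 x0 x1 x2 f0 f1 f2 y0 y1 y2) c) = Mono (gv e0 e1 e2 x0 x1 x2 f0 f1 (f2 - 1) y0 y1 y2) (c * f2) := by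
  rw [pderiv_Mono, show Function.update (gv e0 e1 e2 x0 x1 x2 f0 f1 f2 y0 y1 y2) (8 : Fin 12)
      (gv e0 e1 e2 x0 x1 x2 f0 f1 f2 y0 y1 y2 (8 : Fin 12) - 1) = gv e0 e1 e2 x0 x1 x2 f0 f1 (f2 - 1) y0 y1 y2 from by ext i; fin_cases i <;> rfl]
  rfl

theorem XmulM8 (e0 e1 e2 x0 x1 x2 f0 f1 f2 y0 y1 y2 : ℕ) (c : ℂ) :
    X (8 : Fin 12) * Mono (gv e0 e1 e2 x0 x1 x2 f0 f1 f2 y0 y1 y2) c = Mono (gv e0 e1 e2 x0 x1 x2 f0 f1 (f2 + 1) y0 y1 y2) c := by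
  rw [Xmul_Mono, show Function.update (gv e0 e1 e2 x0 x1 x2 f0 f1 f2 y0 y1 y2) (8 : Fin 12)
      (gv e0 e1 e2 x0 x1 x2 f0 f1 f2 y0 y1 y2 (8 : Fin 12) + 1) = gv e0 e1 e2 x0 x1 x2 f0 f1 (f2 + 1) y0 y1 y2 from by ext i; fin_cases i <;> rfl]

theorem pdM9 (e0 e1 e2 x0 x1 x2 f0 f1 f2 y0 y1 y2 : ℕ) (c : ℂ) :
    pderiv (9 : Fin 12) (Mono (gv e0 e1 e2 x0 x1 x2 f0 f1 f2 y0 y1 y2) c) = Mono (gv e0 e1 e2 x0 x1 x2 f0 f1 f2 (y0 - 1) y1 y2) (c * y0) := by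
  rw [pderiv_Mono, show Function.update (gv e0 e1 e2 x0 x1 x2 f0 f1 f2 y0 y1 y2) (9 : Fin 12)
      (gv e0 e1 e2 x0 x1 x2 f0 f1 f2 y0 y1 y2 (9 : Fin 12) - 1) = gv e0 e1 e2 x0 x1 x2 f0 f1 f2 (y0 - 1) y1 y2 from by ext i; fin_cases i <;> rfl]
  rfl

theorem XmulM9 (e0 e1 e2 x0 x1 x2 f0 f1 f2 y0 y1 y2 : ℕ) (c : ℂ) :
    X (9 : Fin 12) * Mono (gv e0 e1 e2 x0 x1 x2 f0 f1 f2 y0 y1 y2) c = Mono (gv e0 e1 e2 x0 x1 x2 f0 f1 f2 (y0 + 1) y1 y2) c := by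
  rw [Xmul_Mono, show Function.update (gv e0 e1 e2 x0 x1 x2 f0 f1 f2 y0 y1 y2) (9 : Fin 12)
      (gv e0 e1 e2 x0 x1 x2 f0 f1 f2 y0 y1 y2 (9 : Fin 12) + 1) = gv e0 e1 e2 x0 x1 x2 f0 f1 f2 (y0 + 1) y1 y2 from by ext i; fin_cases i <;> rfl]

theorem pdM10 (e0 e1 e2 x0 x1 x2 f0 f1 f2 y0 y1 y2 : ℕ) (c : ℂ) :
    pderiv (10 : Fin 12) (Mono (gv e0 e1 e2 x0 x1 x2 f0 f1 f2 y0 y1 y2) c) = Mono (gv e0 e1 e2 x0 x1 x2 f0 f1 f2 y0 (y1 - 1) y2) (c * y1) := by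
  rw [pderiv_Mono, show Function.update (gv e0 e1 e2 x0 x1 x2 f0 f1 f2 y0 y1 y2) (10 : Fin 12)
      (gv e0 e1 e2 x0 x1 x2 f0 f1 f2 y0 y1 y2 (10 : Fin 12) - 1) = gv e0 e1 e2 x0 x1 x2 f0 f1 f2 y0 (y1 - 1) y2 from by ext i; fin_cases i <;> rfl]
  rfl

theorem XmulM10 (e0 e1 e2 x0 x1 x2 f0 f1 f2 y0 y1 y2 : ℕ) (c : ℂ) :
    X (10 : Fin 12) * Mono (gv e0 e1 e2 x0 x1 x2 f0 f1 f2 y0 y1 y2) c = Mono (gv e0 e1 e2 x0 x1 x2 f0 f1 f2 y0 (y1 + 1) y2) c := by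
  rw [Xmul_Mono, show Function.update (gv e0 e1 e2 x0 x1 x2 f0 f1 f2 y0 y1 y2) (10 : Fin 12)
      (gv e0 e1 e2 x0 x1 x2 f0 f1 f2 y0 y1 y2 (10 : Fin 12) + 1) = gv e0 e1 e2 x0 x1 x2 f0 f1 f2 y0 (y1 + 1) y2 from by ext i; fin_cases i <;> rfl]

theorem pdM11 (e0 e1 e2 x0 x1 x2 f0 f1 f2 y0 y1 y2 : ℕ) (c : ℂ) :
    pderiv (11 : Fin 12) (Mono (gv e0 e1 e2 x0 x1 x2 f0 f1 f2 y0 y1 y2) c) = Mono (gv e0 e1 e2 x0 x1 x2 f0 f1 f2 y0 y1 (y2 - 1)) (c * y2) := by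
  rw [pderiv_Mono, show Function.update (gv e0 e1 e2 x0 x1 x2 f0 f1 f2 y0 y1 y2) (11 : Fin 12)
      (gv e0 e1 e2 x0 x1 x2 f0 f1 f2 y0 y1 y2 (11 : Fin 12) - 1) = gv e0 e1 e2 x0 x1 x2 f0 f1 f2 y0 y1 (y2 - 1) from by ext i; fin_cases i <;> rfl]
  rfl

theorem XmulM11 (e0 e1 e2 x0 x1 x2 f0 f1 f2 y0 y1 y2 : ℕ) (c : ℂ) :
    X (11 : Fin 12) * Mono (gv e0 e1 e2 x0 x1 x2 f0 f1 f2 y0 y1 y2) c = Mono (gv e0 e1 e2 x0 x1 x2 f0 f1 f2 y0 y1 (y2 + 1)) c := by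
  rw [Xmul_Mono, show Function.update (gv e0 e1 e2 x0 x1 x2 f0 f1 f2 y0 y1 y2) (11 : Fin 12)
      (gv e0 e1 e2 x0 x1 x2 f0 f1 f2 y0 y1 y2 (11 : Fin 12) + 1) = gv e0 e1 e2 x0 x1 x2 f0 f1 f2 y0 y1 (y2 + 1) from by ext i; fin_cases i <;> rfl]


theorem ev0 : ev 0 = (0 : Fin 12) := rfl
theorem ev1 : ev 1 = (1 : Fin 12) := rfl
theorem ev2 : ev 2 = (2 : Fin 12) := rfl
theorem xv0 : xv 0 = (3 : Fin 12) := rfl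
theorem xv1 : xv 1 = (4 : Fin 12) := rfl
theorem xv2 : xv 2 = (5 : Fin 12) := rfl
theorem ep0 : ep 0 = (6 : Fin 12) := rfl
theorem ep1 : ep 1 = (7 : Fin 12) := rfl
theorem ep2 : ep 2 = (8 : Fin 12) := rfl
theorem xp0 : xp 0 = (9 : Fin 12) := rfl
theorem xp1 : xp 1 = (10 : Fin 12) := rfl
theorem xp2 : xp 2 = (11 : Fin 12) := rfl

theorem alphaM (e0 e1 e2 x0 x1 x2 f0 f1 f2 y0 y1 y2 : ℕ) (c : ℂ) :
    α (Mono (gv e0 e1 e2 x0 x1 x2 f0 f1 f2 y0 y1 y2) c) =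
      Mono (gv (e0-1) e1 e2 x0 x1 x2 f0 f1 f2 (y0-1) y1 y2) (c * y0 * e0)
      + Mono (gv e0 (e1-1) e2 x0 x1 x2 f0 f1 f2 y0 (y1-1) y2) (c * y1 * e1)
      + Mono (gv e0 e1 (e2-1) x0 x1 x2 f0 f1 f2 y0 y1 (y2-1)) (c * y2 * e2) := by
  rw [α, LinearMap.sum_apply, Fin.sum_univ_three]
  simp only [LinearMap.comp_apply, Derivation.coeFn_coe, ev0, ev1, ev2, xp0, xp1, xp2,
    pdM9, pdM10, pdM11, pdM0, pdM1, pdM2]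

theorem betaM (e0 e1 e2 x0 x1 x2 f0 f1 f2 y0 y1 y2 : ℕ) (c : ℂ) :
    β (Mono (gv e0 e1 e2 x0 x1 x2 f0 f1 f2 y0 y1 y2) c) =
      Mono (gv e0 e1 e2 (x0-1) x1 x2 (f0-1) f1 f2 y0 y1 y2) (c * f0 * x0)
      + Mono (gv e0 e1 e2 x0 (x1-1) x2 f0 (f1-1) f2 y0 y1 y2) (c * f1 * x1)
      + Mono (gv e0 e1 e2 x0 x1 (x2-1) f0 f1 (f2-1) y0 y1 y2) (c * f2 * x2) := by
  rw [β, LinearMap.sum_apply, Fin.sum_univ_three]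
  simp only [LinearMap.comp_apply, Derivation.coeFn_coe, xv0, xv1, xv2, ep0, ep1, ep2,
    pdM6, pdM7, pdM8, pdM3, pdM4, pdM5]

theorem deltaM (e0 e1 e2 x0 x1 x2 f0 f1 f2 y0 y1 y2 : ℕ) (c : ℂ) :
    Δ₂ (Mono (gv e0 e1 e2 x0 x1 x2 f0 f1 f2 y0 y1 y2) c) =
      Mono (gv (e0-1) e1 e2 (x0-1) x1 x2 f0 f1 f2 y0 y1 y2) (c * x0 * e0)
      + Mono (gv e0 (e1-1) e2 x0 (x1-1) x2 f0 f1 f2 y0 y1 y2) (c * x1 * e1)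
      + Mono (gv e0 e1 (e2-1) x0 x1 (x2-1) f0 f1 f2 y0 y1 y2) (c * x2 * e2) := by
  rw [Δ₂, LinearMap.sum_apply, Fin.sum_univ_three]
  simp only [LinearMap.comp_apply, Derivation.coeFn_coe, ev0, ev1, ev2, xv0, xv1, xv2,
    pdM3, pdM4, pdM5, pdM0, pdM1, pdM2]

theorem deltaM' (e0 e1 e2 x0 x1 x2 f0 f1 f2 y0 y1 y2 : ℕ) (c : ℂ) :
    Δ₂' (Mono (gv e0 e1 e2 x0 x1 x2 f0 f1 f2 y0 y1 y2) c) =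
      Mono (gv e0 e1 e2 x0 x1 x2 (f0-1) f1 f2 (y0-1) y1 y2) (c * y0 * f0)
      + Mono (gv e0 e1 e2 x0 x1 x2 f0 (f1-1) f2 y0 (y1-1) y2) (c * y1 * f1)
      + Mono (gv e0 e1 e2 x0 x1 x2 f0 f1 (f2-1) y0 y1 (y2-1)) (c * y2 * f2) := by
  rw [Δ₂', LinearMap.sum_apply, Fin.sum_univ_three]
  simp only [LinearMap.comp_apply, Derivation.coeFn_coe, ep0, ep1, ep2, xp0, xp1, xp2,
    pdM9, pdM10, pdM11, pdM6, pdM7, pdM8]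

theorem permUniv : (Finset.univ : Finset (Equiv.Perm (Fin 3))) =
    {1, Equiv.swap 0 1, Equiv.swap 0 2, Equiv.swap 1 2,
      Equiv.swap 0 1 * Equiv.swap 1 2, Equiv.swap 1 2 * Equiv.swap 0 1} := by decide

theorem thetaM (e0 e1 e2 x0 x1 x2 f0 f1 f2 y0 y1 y2 : ℕ) (c : ℂ) :
    θ (Mono (gv e0 e1 e2 x0 x1 x2 f0 f1 f2 y0 y1 y2) c) =
      Mono (gv (e0-1) e1 e2 x0 x1 (x2+1) f0 (f1-1) f2 y0 y1 y2) (c * f1 * e0)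
      - Mono (gv e0 (e1-1) e2 x0 x1 (x2+1) (f0-1) f1 f2 y0 y1 y2) (c * f0 * e1)
      - Mono (gv e0 e1 (e2-1) (x0+1) x1 x2 f0 (f1-1) f2 y0 y1 y2) (c * f1 * e2)
      - Mono (gv (e0-1) e1 e2 x0 (x1+1) x2 f0 f1 (f2-1) y0 y1 y2) (c * f2 * e0)
      + Mono (gv e0 (e1-1) e2 (x0+1) x1 x2 f0 f1 (f2-1) y0 y1 y2) (c * f2 * e1)
      + Mono (gv e0 e1 (e2-1) x0 (x1+1) x2 (f0-1) f1 f2 y0 y1 y2) (c * f0 * e2) := by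
  rw [θ, LinearMap.sum_apply, permUniv]
  rw [Finset.sum_insert (by decide), Finset.sum_insert (by decide),
    Finset.sum_insert (by decide), Finset.sum_insert (by decide),
    Finset.sum_insert (by decide), Finset.sum_singleton]
  simp only [LinearMap.smul_apply, LinearMap.comp_apply, LinearMap.mulLeft_apply,
    Derivation.coeFn_coe, Equiv.Perm.one_apply,
    show ((Equiv.swap 0 1 : Equiv.Perm (Fin 3))) 0 = 1 from by decide,
    show ((Equiv.swap 0 1 : Equiv.Perm (Fin 3))) 1 = 0 from by decide,
    show ((Equiv.swap 0 1 : Equiv.Perm (Fin 3))) 2 = 2 from by decide,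
    show ((Equiv.swap 0 2 : Equiv.Perm (Fin 3))) 0 = 2 from by decide,
    show ((Equiv.swap 0 2 : Equiv.Perm (Fin 3))) 1 = 1 from by decide,
    show ((Equiv.swap 0 2 : Equiv.Perm (Fin 3))) 2 = 0 from by decide,
    show ((Equiv.swap 1 2 : Equiv.Perm (Fin 3))) 0 = 0 from by decide,
    show ((Equiv.swap 1 2 : Equiv.Perm (Fin 3))) 1 = 2 from by decide,
    show ((Equiv.swap 1 2 : Equiv.Perm (Fin 3))) 2 = 1 from by decide,
    show ((Equiv.swap 0 1 * Equiv.swap 1 2 : Equiv.Perm (Fin 3))) 0 = 1 from by decide,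
    show ((Equiv.swap 0 1 * Equiv.swap 1 2 : Equiv.Perm (Fin 3))) 1 = 2 from by decide,
    show ((Equiv.swap 0 1 * Equiv.swap 1 2 : Equiv.Perm (Fin 3))) 2 = 0 from by decide,
    show ((Equiv.swap 1 2 * Equiv.swap 0 1 : Equiv.Perm (Fin 3))) 0 = 2 from by decide,
    show ((Equiv.swap 1 2 * Equiv.swap 0 1 : Equiv.Perm (Fin 3))) 1 = 0 from by decide,
    show ((Equiv.swap 1 2 * Equiv.swap 0 1 : Equiv.Perm (Fin 3))) 2 = 1 from by decide,
    show Equiv.Perm.sign (1 : Equiv.Perm (Fin 3)) = 1 from by decide,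
    show Equiv.Perm.sign (Equiv.swap 0 1 : Equiv.Perm (Fin 3)) = -1 from by decide,
    show Equiv.Perm.sign (Equiv.swap 0 2 : Equiv.Perm (Fin 3)) = -1 from by decide,
    show Equiv.Perm.sign (Equiv.swap 1 2 : Equiv.Perm (Fin 3)) = -1 from by decide,
    show Equiv.Perm.sign (Equiv.swap 0 1 * Equiv.swap 1 2 : Equiv.Perm (Fin 3)) = 1 from by decide,
    show Equiv.Perm.sign (Equiv.swap 1 2 * Equiv.swap 0 1 : Equiv.Perm (Fin 3)) = 1 from by decide,
    ev0, ev1, ev2, xv0, xv1, xv2, ep0, ep1, ep2,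
    XmulM3, XmulM4, XmulM5, pdM6, pdM7, pdM8, pdM0, pdM1, pdM2,
    Units.val_one, Int.cast_one, one_smul, Units.val_neg, Int.cast_neg, neg_smul]
  ring

theorem omegaM (e0 e1 e2 x0 x1 x2 f0 f1 f2 y0 y1 y2 : ℕ) (c : ℂ) :
    ω (Mono (gv e0 e1 e2 x0 x1 x2 f0 f1 f2 y0 y1 y2) c) =
      Mono (gv (e0+1) e1 e2 x0 (x1-1) x2 f0 f1 f2 y0 y1 (y2-1)) (c * y2 * x1)
      - Mono (gv e0 (e1+1) e2 (x0-1) x1 x2 f0 f1 f2 y0 y1 (y2-1)) (c * y2 * x0)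
      - Mono (gv e0 e1 (e2+1) x0 (x1-1) x2 f0 f1 f2 (y0-1) y1 y2) (c * y0 * x1)
      - Mono (gv (e0+1) e1 e2 x0 x1 (x2-1) f0 f1 f2 y0 (y1-1) y2) (c * y1 * x2)
      + Mono (gv e0 (e1+1) e2 x0 x1 (x2-1) f0 f1 f2 (y0-1) y1 y2) (c * y0 * x2)
      + Mono (gv e0 e1 (e2+1) (x0-1) x1 x2 f0 f1 f2 y0 (y1-1) y2) (c * y1 * x0) := by
  rw [ω, LinearMap.sum_apply, permUniv]
  rw [Finset.sum_insert (by decide), Finset.sum_insert (by decide),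
    Finset.sum_insert (by decide), Finset.sum_insert (by decide),
    Finset.sum_insert (by decide), Finset.sum_singleton]
  simp only [LinearMap.smul_apply, LinearMap.comp_apply, LinearMap.mulLeft_apply,
    Derivation.coeFn_coe, Equiv.Perm.one_apply,
    show ((Equiv.swap 0 1 : Equiv.Perm (Fin 3))) 0 = 1 from by decide,
    show ((Equiv.swap 0 1 : Equiv.Perm (Fin 3))) 1 = 0 from by decide,
    show ((Equiv.swap 0 1 : Equiv.Perm (Fin 3))) 2 = 2 from by decide,
    show ((Equiv.swap 0 2 : Equiv.Perm (Fin 3))) 0 = 2 from by decide,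
    show ((Equiv.swap 0 2 : Equiv.Perm (Fin 3))) 1 = 1 from by decide,
    show ((Equiv.swap 0 2 : Equiv.Perm (Fin 3))) 2 = 0 from by decide,
    show ((Equiv.swap 1 2 : Equiv.Perm (Fin 3))) 0 = 0 from by decide,
    show ((Equiv.swap 1 2 : Equiv.Perm (Fin 3))) 1 = 2 from by decide,
    show ((Equiv.swap 1 2 : Equiv.Perm (Fin 3))) 2 = 1 from by decide,
    show ((Equiv.swap 0 1 * Equiv.swap 1 2 : Equiv.Perm (Fin 3))) 0 = 1 from by decide,
    show ((Equiv.swap 0 1 * Equiv.swap 1 2 : Equiv.Perm (Fin 3))) 1 = 2 from by decide,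
    show ((Equiv.swap 0 1 * Equiv.swap 1 2 : Equiv.Perm (Fin 3))) 2 = 0 from by decide,
    show ((Equiv.swap 1 2 * Equiv.swap 0 1 : Equiv.Perm (Fin 3))) 0 = 2 from by decide,
    show ((Equiv.swap 1 2 * Equiv.swap 0 1 : Equiv.Perm (Fin 3))) 1 = 0 from by decide,
    show ((Equiv.swap 1 2 * Equiv.swap 0 1 : Equiv.Perm (Fin 3))) 2 = 1 from by decide,
    show Equiv.Perm.sign (1 : Equiv.Perm (Fin 3)) = 1 from by decide,
    show Equiv.Perm.sign (Equiv.swap 0 1 : Equiv.Perm (Fin 3)) = -1 from by decide,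
    show Equiv.Perm.sign (Equiv.swap 0 2 : Equiv.Perm (Fin 3)) = -1 from by decide,
    show Equiv.Perm.sign (Equiv.swap 1 2 : Equiv.Perm (Fin 3)) = -1 from by decide,
    show Equiv.Perm.sign (Equiv.swap 0 1 * Equiv.swap 1 2 : Equiv.Perm (Fin 3)) = 1 from by decide,
    show Equiv.Perm.sign (Equiv.swap 1 2 * Equiv.swap 0 1 : Equiv.Perm (Fin 3)) = 1 from by decide,
    ev0, ev1, ev2, xv0, xv1, xv2, xp0, xp1, xp2,
    XmulM0, XmulM1, XmulM2, pdM9, pdM10, pdM11, pdM3, pdM4, pdM5,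
    Units.val_one, Int.cast_one, one_smul, Units.val_neg, Int.cast_neg, neg_smul]
  ring

theorem Mono_eq_prod (g : Fin 12 → ℕ) (c : ℂ) :
    Mono g c = C c * ∏ i : Fin 12, (X i : R12) ^ g i := by
  rw [Mono, monomial_eq]
  congr 1
  rw [Finsupp.prod_fintype]
  · rfl
  · intro i; exact pow_zero _

theorem prod_gv (e0 e1 e2 x0 x1 x2 f0 f1 f2 y0 y1 y2 : ℕ) :
    (∏ i : Fin 12, (X i : R12) ^ gv e0 e1 e2 x0 x1 x2 f0 f1 f2 y0 y1 y2 i)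
      = X 0 ^ e0 * (X 1 ^ e1 * (X 2 ^ e2 * (X 3 ^ x0 * (X 4 ^ x1 * (X 5 ^ x2 * (X 6 ^ f0
        * (X 7 ^ f1 * (X 8 ^ f2 * (X 9 ^ y0 * (X 10 ^ y1 * X 11 ^ y2)))))))))) := by
  simp only [Fin.prod_univ_succ, Fin.prod_univ_zero, mul_one, mul_assoc]
  rfl

theorem mueX0 : μe (X 0) = (X 0 : R12) := by rw [μe, aeval_X]; rfl
theorem muxX0 : μx (X 0) = (X 0 : R12) := by rw [μx, aeval_X]; rfl
theorem mueX1 : μe (X 1) = (X 1 : R12) := by rw [μe, aeval_X]; rfl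
theorem muxX1 : μx (X 1) = (X 1 : R12) := by rw [μx, aeval_X]; rfl
theorem mueX2 : μe (X 2) = (X 2 : R12) := by rw [μe, aeval_X]; rfl
theorem muxX2 : μx (X 2) = (X 2 : R12) := by rw [μx, aeval_X]; rfl
theorem mueX3 : μe (X 3) = (X 3 : R12) := by rw [μe, aeval_X]; rfl
theorem muxX3 : μx (X 3) = (X 3 : R12) := by rw [μx, aeval_X]; rfl
theorem mueX4 : μe (X 4) = (X 4 : R12) := by rw [μe, aeval_X]; rfl
theorem muxX4 : μx (X 4) = (X 4 : R12) := by rw [μx, aeval_X]; rfl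
theorem mueX5 : μe (X 5) = (X 5 : R12) := by rw [μe, aeval_X]; rfl
theorem muxX5 : μx (X 5) = (X 5 : R12) := by rw [μx, aeval_X]; rfl
theorem mueX6 : μe (X 6) = (X 0 : R12) := by rw [μe, aeval_X]; rfl
theorem muxX6 : μx (X 6) = (X 6 : R12) := by rw [μx, aeval_X]; rfl
theorem mueX7 : μe (X 7) = (X 1 : R12) := by rw [μe, aeval_X]; rfl
theorem muxX7 : μx (X 7) = (X 7 : R12) := by rw [μx, aeval_X]; rfl
theorem mueX8 : μe (X 8) = (X 2 : R12) := by rw [μe, aeval_X]; rfl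
theorem muxX8 : μx (X 8) = (X 8 : R12) := by rw [μx, aeval_X]; rfl
theorem mueX9 : μe (X 9) = (X 9 : R12) := by rw [μe, aeval_X]; rfl
theorem muxX9 : μx (X 9) = (X 3 : R12) := by rw [μx, aeval_X]; rfl
theorem mueX10 : μe (X 10) = (X 10 : R12) := by rw [μe, aeval_X]; rfl
theorem muxX10 : μx (X 10) = (X 4 : R12) := by rw [μx, aeval_X]; rfl
theorem mueX11 : μe (X 11) = (X 11 : R12) := by rw [μe, aeval_X]; rfl
theorem muxX11 : μx (X 11) = (X 5 : R12) := by rw [μx, aeval_X]; rfl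

theorem mueM (e0 e1 e2 x0 x1 x2 f0 f1 f2 y0 y1 y2 : ℕ) (c : ℂ) :
    μe (Mono (gv e0 e1 e2 x0 x1 x2 f0 f1 f2 y0 y1 y2) c) =
      Mono (gv (e0+f0) (e1+f1) (e2+f2) x0 x1 x2 0 0 0 y0 y1 y2) c := by
  rw [Mono_eq_prod, Mono_eq_prod, prod_gv, prod_gv]
  simp only [map_mul, map_pow, mueX0, mueX1, mueX2, mueX3, mueX4, mueX5, mueX6, mueX7,
    mueX8, mueX9, mueX10, mueX11, show μe (C c) = C c from by rw [μe, aeval_C]; rfl]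
  ring

theorem muxM (e0 e1 e2 x0 x1 x2 f0 f1 f2 y0 y1 y2 : ℕ) (c : ℂ) :
    μx (Mono (gv e0 e1 e2 x0 x1 x2 f0 f1 f2 y0 y1 y2) c) =
      Mono (gv e0 e1 e2 (x0+y0) (x1+y1) (x2+y2) f0 f1 f2 0 0 0) c := by
  rw [Mono_eq_prod, Mono_eq_prod, prod_gv, prod_gv]
  simp only [map_mul, map_pow, muxX0, muxX1, muxX2, muxX3, muxX4, muxX5, muxX6, muxX7,
    muxX8, muxX9, muxX10, muxX11, show μx (C c) = C c from by rw [μx, aeval_C]; rfl]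
  ring

theorem weight_gv (w : Fin 12 → ℕ) (e0 e1 e2 x0 x1 x2 f0 f1 f2 y0 y1 y2 : ℕ) :
    Finsupp.weight w (Finsupp.equivFunOnFinite.symm (gv e0 e1 e2 x0 x1 x2 f0 f1 f2 y0 y1 y2))
      = e0 * w 0 + e1 * w 1 + e2 * w 2 + x0 * w 3 + x1 * w 4 + x2 * w 5 + f0 * w 6
        + f1 * w 7 + f2 * w 8 + y0 * w 9 + y1 * w 10 + y2 * w 11 := by
  rw [Finsupp.weight_apply, Finsupp.sum_fintype]
  · rw [Fin.sum_univ_succ, Fin.sum_univ_succ, Fin.sum_univ_succ, Fin.sum_univ_succ,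
      Fin.sum_univ_succ, Fin.sum_univ_succ, Fin.sum_univ_succ, Fin.sum_univ_succ,
      Fin.sum_univ_succ, Fin.sum_univ_succ, Fin.sum_univ_succ, Fin.sum_univ_one]
    show e0 • w 0 + (e1 • w 1 + (e2 • w 2 + (x0 • w 3 + (x1 • w 4 + (x2 • w 5 + (f0 • w 6
      + (f1 • w 7 + (f2 • w 8 + (y0 • w 9 + (y1 • w 10 + y2 • w 11)))))))))) = _
    simp only [smul_eq_mul]
    ring
  · intro i; exact zero_smul _ _

theorem memSD4 (e0 e1 e2 x0 x1 x2 f0 f1 f2 y0 y1 y2 : ℕ) (c : ℂ) (A B C D : ℕ)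
    (h1 : e0+e1+e2 = A) (h2 : x0+x1+x2 = B) (h3 : f0+f1+f2 = C) (h4 : y0+y1+y2 = D) :
    Mono (gv e0 e1 e2 x0 x1 x2 f0 f1 f2 y0 y1 y2) c ∈ SD4 A B C D := by
  refine ⟨⟨⟨?_, ?_⟩, ?_⟩, ?_⟩ <;>
  · show _ ∈ weightedHomogeneousSubmodule ℂ _ _
    rw [mem_weightedHomogeneousSubmodule]
    apply isWeightedHomogeneous_monomial
    rw [weight_gv]
    simp only [wE, wX, wEp, wXp, show ((0:Fin 12):ℕ) = 0 from rfl, show ((1:Fin 12):ℕ) = 1 from rfl, show ((2:Fin 12):ℕ) = 2 from rfl, show ((3:Fin 12):ℕ) = 3 from rfl, show ((4:Fin 12):ℕ) = 4 from rfl, show ((5:Fin 12):ℕ) = 5 from rfl, show ((6:Fin 12):ℕ) = 6 from rfl, show ((7:Fin 12):ℕ) = 7 from rfl, show ((8:Fin 12):ℕ) = 8 from rfl, show ((9:Fin 12):ℕ) = 9 from rfl, show ((10:Fin 12):ℕ) = 10 from rfl, show ((11:Fin 12):ℕ) = 11 from rfl]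
    norm_num
    omega

theorem Mono_neg (g : Fin 12 → ℕ) (c : ℂ) : -Mono g c = Mono g (-c) := by
  rw [Mono, Mono, ← map_neg]

theorem chain_exists (L : Module.End ℂ R12) (F : ℕ → R12) (m : ℕ)
    (h : ∀ i, i < m → ∃ c : ℂ, L (F i) = c • F (i + 1)) :
    ∃ c : ℂ, (L ^ m) (F 0) = c • F m := by
  induction m with
  | zero => exact ⟨1, by simp⟩
  | succ m ih =>
    obtain ⟨c, hc⟩ := ih fun i hi => h i (Nat.lt_succ_of_lt hi)
    obtain ⟨c', hc'⟩ := h m (Nat.lt_succ_self m)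
    exact ⟨c * c', by
      rw [pow_succ', Module.End.mul_apply, hc, map_smul, hc', smul_smul]⟩

theorem chain_exists_ne (L : Module.End ℂ R12) (F : ℕ → R12) (m : ℕ)
    (h : ∀ i, i < m → ∃ c : ℂ, c ≠ 0 ∧ L (F i) = c • F (i + 1)) :
    ∃ c : ℂ, c ≠ 0 ∧ (L ^ m) (F 0) = c • F m := by
  induction m with
  | zero => exact ⟨1, one_ne_zero, by simp⟩
  | succ m ih =>
    obtain ⟨c, hc0, hc⟩ := ih fun i hi => h i (Nat.lt_succ_of_lt hi)
    obtain ⟨c', hc0', hc'⟩ := h m (Nat.lt_succ_self m)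
    exact ⟨c * c', mul_ne_zero hc0 hc0', by
      rw [pow_succ', Module.End.mul_apply, hc, map_smul, hc', smul_smul]⟩

theorem pow_zero_of_zero (L : Module.End ℂ R12) (p : R12) (m n : ℕ) (hmn : m ≤ n)
    (h : (L ^ m) p = 0) : (L ^ n) p = 0 := by
  obtain ⟨r, rfl⟩ := Nat.exists_eq_add_of_le hmn
  rw [add_comm, pow_add, Module.End.mul_apply, h, map_zero]

theorem coeff_delta_mul (h : Fin 12 → ℕ) (he1 : h 1 = 0) (hx0 : h 3 = 0) (hx2 : h 5 = 0)
    (q : R12) : coeff (Finsupp.equivFunOnFinite.symm h) (δ₂ q) = 0 := by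
  rw [δ₂, LinearMap.mulLeft_apply, Fin.sum_univ_three, add_mul, add_mul, coeff_add, coeff_add]
  rw [show (X (ev 0) * X (xv 0) * q : R12) = X 3 * (X (ev 0) * q) from by rw [xv0]; ring,
    show (X (ev 1) * X (xv 1) * q : R12) = X 1 * (X (xv 1) * q) from by rw [ev1]; ring,
    show (X (ev 2) * X (xv 2) * q : R12) = X 5 * (X (ev 2) * q) from by rw [xv2]; ring]
  simp only [coeff_X_mul']
  simp [Finsupp.mem_support_iff, he1, hx0, hx2]

theorem alpha_step_theta (a b c d S K : ℕ) (i : ℕ) :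
    α (Mono (gv (a-i) 0 0 0 (b-K) K 0 0 c (S-K-i) (d-(S-K)) 0) 1)
      = (((S-K-i) * (a-i) : ℕ) : ℂ) •
        Mono (gv (a-(i+1)) 0 0 0 (b-K) K 0 0 c (S-K-(i+1)) (d-(S-K)) 0) 1 := by
  rw [alphaM, smul_Mono,
    show a - i - 1 = a - (i+1) from by omega,
    show S - K - i - 1 = S - K - (i+1) from by omega]
  norm_num [Mono_zero]

theorem alpha_chain_theta (a b c d S K : ℕ) (m : ℕ) :
    ∃ cc : ℂ, (α ^ m) (Mono (gv a 0 0 0 (b-K) K 0 0 c (S-K) (d-(S-K)) 0) 1)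
      = cc • Mono (gv (a-m) 0 0 0 (b-K) K 0 0 c (S-K-m) (d-(S-K)) 0) 1 := by
  have := chain_exists α
    (fun i => Mono (gv (a-i) 0 0 0 (b-K) K 0 0 c (S-K-i) (d-(S-K)) 0) 1) m
    (fun i _ => ⟨_, alpha_step_theta a b c d S K i⟩)
  simpa using this

theorem theta_vanish_low (a b c d S K m : ℕ) (hm : S - K < m) :
    (α ^ m) (Mono (gv a 0 0 0 (b-K) K 0 0 c (S-K) (d-(S-K)) 0) 1) = 0 := by
  apply pow_zero_of_zero α _ (S - K + 1) m hm
  rw [pow_succ', Module.End.mul_apply]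
  obtain ⟨cc, hcc⟩ := alpha_chain_theta a b c d S K (S-K)
  rw [hcc, map_smul, alphaM]
  norm_num [Mono_zero]

theorem theta_vanish_high (a b c d S K m n : ℕ) (hn : K < n) :
    (β ^ n) ((α ^ m) (Mono (gv a 0 0 0 (b-K) K 0 0 c (S-K) (d-(S-K)) 0) 1)) = 0 := by
  obtain ⟨cc, hcc⟩ := alpha_chain_theta a b c d S K m
  rw [hcc, map_smul]
  have hb : ∀ i : ℕ, β (Mono (gv (a-m) 0 0 0 (b-K) (K-i) 0 0 (c-i) (S-K-m) (d-(S-K)) 0) 1)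
      = (((c-i) * (K-i) : ℕ) : ℂ) •
        Mono (gv (a-m) 0 0 0 (b-K) (K-(i+1)) 0 0 (c-(i+1)) (S-K-m) (d-(S-K)) 0) 1 := by
    intro i
    rw [betaM, smul_Mono,
      show K - i - 1 = K - (i+1) from by omega,
      show c - i - 1 = c - (i+1) from by omega]
    norm_num [Mono_zero]
  obtain ⟨cc2, hcc2⟩ := chain_exists β
    (fun i => Mono (gv (a-m) 0 0 0 (b-K) (K-i) 0 0 (c-i) (S-K-m) (d-(S-K)) 0) 1) K
    (fun i _ => ⟨_, hb i⟩)
  apply smul_eq_zero_of_right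
  apply pow_zero_of_zero β _ (K + 1) n hn
  rw [pow_succ', Module.End.mul_apply]
  simp only [Nat.sub_zero] at hcc2
  rw [hcc2, map_smul, betaM]
  norm_num [Mono_zero]

theorem theta_eval (a b c d S T K : ℕ) (hKb : K ≤ b) (hKS : K ≤ S) (hSKd : S ≤ K + d)
    (hSTa : S + T ≤ K + a) (hKTc : K + T ≤ c) :
    ∃ N : ℂ, N ≠ 0 ∧
      μe ((θ ^ T) (μx ((β ^ K) ((α ^ (S - K))
        (Mono (gv a 0 0 0 (b-K) K 0 0 c (S-K) (d-(S-K)) 0) 1)))))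
      = N • Mono (gv (a-(S-K)-T) 0 (c-K-T) 0 ((b-K)+(d-(S-K))+T) 0 0 0 0 0 0 0) 1 := by
  obtain ⟨c1, hc10, hc1⟩ := chain_exists_ne α
    (fun i => Mono (gv (a-i) 0 0 0 (b-K) K 0 0 c (S-K-i) (d-(S-K)) 0) 1) (S-K)
    (by
      intro i hi
      refine ⟨(((S-K-i) * (a-i) : ℕ) : ℂ), ?_, alpha_step_theta a b c d S K i⟩
      have h : (S-K-i) * (a-i) ≠ 0 := by
        have : i < S - K := hi
        apply Nat.mul_ne_zero <;> omega
      exact_mod_cast h)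
  obtain ⟨c2, hc20, hc2⟩ := chain_exists_ne β
    (fun i => Mono (gv (a-(S-K)) 0 0 0 (b-K) (K-i) 0 0 (c-i) 0 (d-(S-K)) 0) 1) K
    (by
      intro i hi
      refine ⟨(((c-i) * (K-i) : ℕ) : ℂ), ?_, ?_⟩
      · have h : (c-i) * (K-i) ≠ 0 := by apply Nat.mul_ne_zero <;> omega
        exact_mod_cast h
      · show β (Mono _ 1) = _
        rw [betaM, smul_Mono,
          show K - i - 1 = K - (i+1) from by omega,
          show c - i - 1 = c - (i+1) from by omega]
        norm_num [Mono_zero])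
  obtain ⟨c3, hc30, hc3⟩ := chain_exists_ne θ
    (fun i => Mono (gv (a-(S-K)-i) 0 0 0 ((b-K)+(d-(S-K))+i) 0 0 0 (c-K-i) 0 0 0) 1) T
    (by
      intro i hi
      refine ⟨-(((c-K-i) * (a-(S-K)-i) : ℕ) : ℂ), ?_, ?_⟩
      · have h : (c-K-i) * (a-(S-K)-i) ≠ 0 := by apply Nat.mul_ne_zero <;> omega
        simpa using h
      · show θ (Mono _ 1) = _
        rw [thetaM, smul_Mono,
          show a - (S-K) - i - 1 = a - (S-K) - (i+1) from by omega,
          show c - K - i - 1 = c - K - (i+1) from by omega,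
          show b - K + (d - (S-K)) + i + 1 = b - K + (d - (S-K)) + (i+1) from by omega]
        norm_num [Mono_zero, Mono_neg])
  simp only [Nat.sub_zero, Nat.sub_self, Nat.add_zero, Nat.zero_add] at hc1 hc2 hc3
  refine ⟨c1 * c2 * c3, by simp [hc10, hc20, hc30], ?_⟩
  simp only [hc1, map_smul, hc2, muxM, hc3, mueM, Nat.sub_self, Nat.add_zero,
    Nat.zero_add, Nat.sub_zero, smul_smul]

theorem coeff_delta_mul' (h : Fin 12 → ℕ) (he0 : h 0 = 0) (he1 : h 1 = 0) (hx2 : h 5 = 0)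
    (q : R12) : coeff (Finsupp.equivFunOnFinite.symm h) (δ₂ q) = 0 := by
  rw [δ₂, LinearMap.mulLeft_apply, Fin.sum_univ_three, add_mul, add_mul, coeff_add, coeff_add]
  rw [show (X (ev 0) * X (xv 0) * q : R12) = X 0 * (X (xv 0) * q) from by rw [ev0]; ring,
    show (X (ev 1) * X (xv 1) * q : R12) = X 1 * (X (xv 1) * q) from by rw [ev1]; ring,
    show (X (ev 2) * X (xv 2) * q : R12) = X 5 * (X (ev 2) * q) from by rw [xv2]; ring]
  simp only [coeff_X_mul']
  simp [Finsupp.mem_support_iff, he0, he1, hx2]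

theorem alpha_step_omega (a b c d S K : ℕ) (i : ℕ) :
    α (Mono (gv 0 (S-K-i) (a-(S-K)) b 0 0 K 0 (c-K) 0 (d-i) 0) 1)
      = (((d-i) * (S-K-i) : ℕ) : ℂ) •
        Mono (gv 0 (S-K-(i+1)) (a-(S-K)) b 0 0 K 0 (c-K) 0 (d-(i+1)) 0) 1 := by
  rw [alphaM, smul_Mono,
    show S - K - i - 1 = S - K - (i+1) from by omega,
    show d - i - 1 = d - (i+1) from by omega]
  norm_num [Mono_zero]

theorem alpha_chain_omega (a b c d S K : ℕ) (m : ℕ) :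
    ∃ cc : ℂ, (α ^ m) (Mono (gv 0 (S-K) (a-(S-K)) b 0 0 K 0 (c-K) 0 d 0) 1)
      = cc • Mono (gv 0 (S-K-m) (a-(S-K)) b 0 0 K 0 (c-K) 0 (d-m) 0) 1 := by
  have := chain_exists α
    (fun i => Mono (gv 0 (S-K-i) (a-(S-K)) b 0 0 K 0 (c-K) 0 (d-i) 0) 1) m
    (fun i _ => ⟨_, alpha_step_omega a b c d S K i⟩)
  simpa using this

theorem omega_vanish_low (a b c d S K m : ℕ) (hm : S - K < m) :
    (α ^ m) (Mono (gv 0 (S-K) (a-(S-K)) b 0 0 K 0 (c-K) 0 d 0) 1) = 0 := by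
  apply pow_zero_of_zero α _ (S - K + 1) m hm
  rw [pow_succ', Module.End.mul_apply]
  obtain ⟨cc, hcc⟩ := alpha_chain_omega a b c d S K (S-K)
  rw [hcc, map_smul, alphaM]
  norm_num [Mono_zero]

theorem omega_vanish_high (a b c d S K m n : ℕ) (hn : K < n) :
    (β ^ n) ((α ^ m) (Mono (gv 0 (S-K) (a-(S-K)) b 0 0 K 0 (c-K) 0 d 0) 1)) = 0 := by
  obtain ⟨cc, hcc⟩ := alpha_chain_omega a b c d S K m
  rw [hcc, map_smul]
  have hb : ∀ i : ℕ, β (Mono (gv 0 (S-K-m) (a-(S-K)) (b-i) 0 0 (K-i) 0 (c-K) 0 (d-m) 0) 1)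
      = (((K-i) * (b-i) : ℕ) : ℂ) •
        Mono (gv 0 (S-K-m) (a-(S-K)) (b-(i+1)) 0 0 (K-(i+1)) 0 (c-K) 0 (d-m) 0) 1 := by
    intro i
    rw [betaM, smul_Mono,
      show K - i - 1 = K - (i+1) from by omega,
      show b - i - 1 = b - (i+1) from by omega]
    norm_num [Mono_zero]
  obtain ⟨cc2, hcc2⟩ := chain_exists β
    (fun i => Mono (gv 0 (S-K-m) (a-(S-K)) (b-i) 0 0 (K-i) 0 (c-K) 0 (d-m) 0) 1) K
    (fun i _ => ⟨_, hb i⟩)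
  apply smul_eq_zero_of_right
  apply pow_zero_of_zero β _ (K + 1) n hn
  rw [pow_succ', Module.End.mul_apply]
  simp only [Nat.sub_zero] at hcc2
  rw [hcc2, map_smul, betaM]
  norm_num [Mono_zero]

theorem omega_eval (a b c d S T K : ℕ) (hKS : K ≤ S) (hSKd : S + T ≤ K + d)
    (hSa : S ≤ K + a) (hKc : K ≤ c) (hKTb : K + T ≤ b) :
    ∃ N : ℂ, N ≠ 0 ∧
      μx ((ω ^ T) (μe ((β ^ K) ((α ^ (S - K))
        (Mono (gv 0 (S-K) (a-(S-K)) b 0 0 K 0 (c-K) 0 d 0) 1)))))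
      = N • Mono (gv 0 0 ((a-(S-K))+(c-K)+T) (b-K-T) (d-(S-K)-T) 0 0 0 0 0 0 0) 1 := by
  obtain ⟨c1, hc10, hc1⟩ := chain_exists_ne α
    (fun i => Mono (gv 0 (S-K-i) (a-(S-K)) b 0 0 K 0 (c-K) 0 (d-i) 0) 1) (S-K)
    (by
      intro i hi
      refine ⟨(((d-i) * (S-K-i) : ℕ) : ℂ), ?_, alpha_step_omega a b c d S K i⟩
      have h : (d-i) * (S-K-i) ≠ 0 := by
        have : i < S - K := hi
        apply Nat.mul_ne_zero <;> omega
      exact_mod_cast h)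
  obtain ⟨c2, hc20, hc2⟩ := chain_exists_ne β
    (fun i => Mono (gv 0 0 (a-(S-K)) (b-i) 0 0 (K-i) 0 (c-K) 0 (d-(S-K)) 0) 1) K
    (by
      intro i hi
      refine ⟨(((K-i) * (b-i) : ℕ) : ℂ), ?_, ?_⟩
      · have h : (K-i) * (b-i) ≠ 0 := by apply Nat.mul_ne_zero <;> omega
        exact_mod_cast h
      · show β (Mono _ 1) = _
        rw [betaM, smul_Mono,
          show K - i - 1 = K - (i+1) from by omega,
          show b - i - 1 = b - (i+1) from by omega]
        norm_num [Mono_zero])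
  obtain ⟨c3, hc30, hc3⟩ := chain_exists_ne ω
    (fun i => Mono (gv 0 0 ((a-(S-K))+(c-K)+i) (b-K-i) 0 0 0 0 0 0 (d-(S-K)-i) 0) 1) T
    (by
      intro i hi
      refine ⟨(((d-(S-K)-i) * (b-K-i) : ℕ) : ℂ), ?_, ?_⟩
      · have h : (d-(S-K)-i) * (b-K-i) ≠ 0 := by apply Nat.mul_ne_zero <;> omega
        exact_mod_cast h
      · show ω (Mono _ 1) = _
        rw [omegaM, smul_Mono,
          show b - K - i - 1 = b - K - (i+1) from by omega,
          show d - (S-K) - i - 1 = d - (S-K) - (i+1) from by omega,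
          show (a-(S-K)) + (c-K) + i + 1 = (a-(S-K)) + (c-K) + (i+1) from by omega]
        norm_num [Mono_zero])
  simp only [Nat.sub_zero, Nat.sub_self, Nat.add_zero, Nat.zero_add] at hc1 hc2 hc3
  refine ⟨c1 * c2 * c3, by simp [hc10, hc20, hc30], ?_⟩
  simp only [hc1, map_smul, hc2, mueM, hc3, muxM, Nat.sub_self, Nat.add_zero,
    Nat.zero_add, Nat.sub_zero, smul_smul]

theorem mem_VV_theta (a b c d S K : ℕ) (hKb : K ≤ b) (hKS : K ≤ S) (hSKd : S ≤ K + d) :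
    Mono (gv a 0 0 0 (b-K) K 0 0 c (S-K) (d-(S-K)) 0) 1 ∈ VV a b c d := by
  refine ⟨⟨memSD4 _ _ _ _ _ _ _ _ _ _ _ _ _ _ _ _ _ (by omega) (by omega) (by omega)
    (by omega), LinearMap.mem_ker.mpr ?_⟩, LinearMap.mem_ker.mpr ?_⟩
  · rw [deltaM]; norm_num [Mono_zero]
  · rw [deltaM']; norm_num [Mono_zero]

theorem mem_VV_omega (a b c d S K : ℕ) (hKS : K ≤ S) (hSa : S ≤ K + a) (hKc : K ≤ c) :
    Mono (gv 0 (S-K) (a-(S-K)) b 0 0 K 0 (c-K) 0 d 0) 1 ∈ VV a b c d := by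
  refine ⟨⟨memSD4 _ _ _ _ _ _ _ _ _ _ _ _ _ _ _ _ _ (by omega) (by omega) (by omega)
    (by omega), LinearMap.mem_ker.mpr ?_⟩, LinearMap.mem_ker.mpr ?_⟩
  · rw [deltaM]; norm_num [Mono_zero]
  · rw [deltaM']; norm_num [Mono_zero]

/-- Linear independence of the maps of Theorem 3.1: given the projection `π = π_{e,f}` of
`S^eD^f` onto `V(e,f)` along `δ(S^{e-1}D^{f-1})`, the restrictions to `V(a,b)⊗V(c,d)` of the
maps `π_{e,f} ∘ μ_e ∘ θ^t ∘ μ_x ∘ β^j ∘ α^{s-j}` (for `t ≥ 0`), resp. of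
`π_{e,f} ∘ μ_x ∘ ω^{-t} ∘ μ_e ∘ β^j ∘ α^{s+t-j}` (for `t ≤ 0`), indexed by `j ∈ J`, are
linearly independent over `ℂ`. -/
theorem stmt1 (a b c d e f : ℕ) (s t : ℤ)
    (hs : 3 * s = ((a : ℤ) + c - e) + 2 * ((b : ℤ) + d - f))
    (ht : 3 * t = ((a : ℤ) + c - e) - ((b : ℤ) + d - f))
    (π : Module.End ℂ R12)
    (hπ : ∀ p ∈ SD2 e f, π p ∈ V2 e f ∧ p - π p ∈ (SDsub2 e f).map δ₂) :
    (0 ≤ t → LinearIndependent ℂ (fun j : {j : ℤ // Jcond a b c d s t j} =>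
      (famθ π s t j.val).domRestrict (VV a b c d))) ∧
    (t ≤ 0 → LinearIndependent ℂ (fun j : {j : ℤ // Jcond a b c d s t j} =>
      (famω π s t j.val).domRestrict (VV a b c d))) := by
  constructor
  · -- θ case
    intro ht0
    rw [linearIndependent_iff']
    intro Fs gcoef hsum k hkFs
    obtain ⟨hk0, hkst, hstcd, hskj, hskd, hsta, hkb, hkbt, hkct, hkc⟩ := k.prop
    set κ := k.val with hκdef
    set S := s.toNat with hSdef
    set T := t.toNat with hTdef
    set K := κ.toNat with hKdef
    have hS : (S : ℤ) = s := Int.toNat_of_nonneg (by omega)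
    have hT : (T : ℤ) = t := Int.toNat_of_nonneg ht0
    have hK : (K : ℤ) = κ := Int.toNat_of_nonneg hk0
    have hKb : K ≤ b := by omega
    have hKS : K ≤ S := by omega
    have hSKd : S ≤ K + d := by omega
    have hSTa : S + T ≤ K + a := by omega
    have hKTc : K + T ≤ c := by omega
    have hv : Mono (gv a 0 0 0 (b-K) K 0 0 c (S-K) (d-(S-K)) 0) 1 ∈ VV a b c d :=
      mem_VV_theta a b c d S K hKb hKS hSKd
    have happ := LinearMap.congr_fun hsum ⟨_, hv⟩
    simp only [LinearMap.coe_sum, Finset.sum_apply, LinearMap.smul_apply,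
      LinearMap.domRestrict_apply, LinearMap.zero_apply] at happ
    rw [Finset.sum_eq_single k (by
        intro j hjFs hjk
        obtain ⟨hj0, hjst, _, hjsk, _, hjsta, hjb, _, _, hjc⟩ := j.prop
        have hjκ : j.val ≠ κ := fun h => hjk (Subtype.ext h)
        simp only [famθ, LinearMap.comp_apply, AlgHom.toLinearMap_apply]
        rcases lt_or_gt_of_ne hjκ with hlt | hgt
        · have hm : S - K < (s - j.val).toNat := by omega
          rw [theta_vanish_low a b c d S K _ hm]
          simp only [map_zero, smul_zero]
        · have hn : K < j.val.toNat := by omega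
          rw [theta_vanish_high a b c d S K _ _ hn]
          simp only [map_zero, smul_zero])
      (fun h => absurd hkFs h)] at happ
    obtain ⟨N, hN0, hNeq⟩ := theta_eval a b c d S T K hKb hKS hSKd hSTa hKTc
    rw [show famθ π s t κ = π ∘ₗ μe.toLinearMap ∘ₗ (θ ^ T) ∘ₗ μx.toLinearMap ∘ₗ
        (β ^ K) ∘ₗ (α ^ (S - K)) from by
      rw [famθ, show (s - κ).toNat = S - K from by omega, ← hTdef, ← hKdef]] at happ
    simp only [LinearMap.comp_apply, AlgHom.toLinearMap_apply] at happ
    rw [hNeq, map_smul] at happ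
    set p : R12 := Mono (gv (a-(S-K)-T) 0 (c-K-T) 0 ((b-K)+(d-(S-K))+T) 0 0 0 0 0 0 0) 1
      with hpdef
    have hpSD : p ∈ SD2 e f := memSD4 _ _ _ _ _ _ _ _ _ _ _ _ _ _ _ _ _
      (by omega) (by omega) (by omega) (by omega)
    obtain ⟨hπ1, hπ2⟩ := hπ p hpSD
    rw [Submodule.mem_map] at hπ2
    obtain ⟨q, _, hq2⟩ := hπ2
    have hcoeff : coeff (Finsupp.equivFunOnFinite.symm
        (gv (a-(S-K)-T) 0 (c-K-T) 0 ((b-K)+(d-(S-K))+T) 0 0 0 0 0 0 0)) (π p) = 1 := by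
      rw [show π p = p - (p - π p) from (sub_sub_cancel p (π p)).symm, coeff_sub, ← hq2,
        coeff_delta_mul _ rfl rfl rfl q, hpdef, coeff_Mono]
      simp
    have hπp0 : π p ≠ 0 := by
      intro h
      rw [h, coeff_zero] at hcoeff
      exact zero_ne_one hcoeff
    rw [smul_smul] at happ
    rcases smul_eq_zero.mp happ with h | h
    · rcases mul_eq_zero.mp h with h' | h'
      · exact h'
      · exact absurd h' hN0
    · exact absurd h hπp0
  · -- ω case
    intro ht0
    rw [linearIndependent_iff']
    intro Fs gcoef hsum k hkFs
    obtain ⟨hk0, hkst, hstcd, hskj, hskd, hsta, hkb, hkbt, hkct, hkc⟩ := k.prop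
    set κ := k.val with hκdef
    set S := (s + t).toNat with hSdef
    set T := (-t).toNat with hTdef
    set K := κ.toNat with hKdef
    have hS : (S : ℤ) = s + t := Int.toNat_of_nonneg (by omega)
    have hT : (T : ℤ) = -t := Int.toNat_of_nonneg (by omega)
    have hK : (K : ℤ) = κ := Int.toNat_of_nonneg hk0
    have hKS : K ≤ S := by omega
    have hSKd : S + T ≤ K + d := by omega
    have hSa : S ≤ K + a := by omega
    have hKc : K ≤ c := by omega
    have hKTb : K + T ≤ b := by omega
    have hv : Mono (gv 0 (S-K) (a-(S-K)) b 0 0 K 0 (c-K) 0 d 0) 1 ∈ VV a b c d :=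
      mem_VV_omega a b c d S K hKS hSa hKc
    have happ := LinearMap.congr_fun hsum ⟨_, hv⟩
    simp only [LinearMap.coe_sum, Finset.sum_apply, LinearMap.smul_apply,
      LinearMap.domRestrict_apply, LinearMap.zero_apply] at happ
    rw [Finset.sum_eq_single k (by
        intro j hjFs hjk
        obtain ⟨hj0, hjst, _, hjsk, _, hjsta, hjb, _, _, hjc⟩ := j.prop
        have hjκ : j.val ≠ κ := fun h => hjk (Subtype.ext h)
        simp only [famω, LinearMap.comp_apply, AlgHom.toLinearMap_apply]
        rcases lt_or_gt_of_ne hjκ with hlt | hgt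
        · have hm : S - K < (s + t - j.val).toNat := by omega
          rw [omega_vanish_low a b c d S K _ hm]
          simp only [map_zero, smul_zero]
        · have hn : K < j.val.toNat := by omega
          rw [omega_vanish_high a b c d S K _ _ hn]
          simp only [map_zero, smul_zero])
      (fun h => absurd hkFs h)] at happ
    obtain ⟨N, hN0, hNeq⟩ := omega_eval a b c d S T K hKS hSKd hSa hKc hKTb
    rw [show famω π s t κ = π ∘ₗ μx.toLinearMap ∘ₗ (ω ^ T) ∘ₗ μe.toLinearMap ∘ₗ
        (β ^ K) ∘ₗ (α ^ (S - K)) from by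
      rw [famω, show (s + t - κ).toNat = S - K from by omega, ← hTdef, ← hKdef]] at happ
    simp only [LinearMap.comp_apply, AlgHom.toLinearMap_apply] at happ
    rw [hNeq, map_smul] at happ
    set p : R12 := Mono (gv 0 0 ((a-(S-K))+(c-K)+T) (b-K-T) (d-(S-K)-T) 0 0 0 0 0 0 0) 1
      with hpdef
    have hpSD : p ∈ SD2 e f := memSD4 _ _ _ _ _ _ _ _ _ _ _ _ _ _ _ _ _
      (by omega) (by omega) (by omega) (by omega)
    obtain ⟨hπ1, hπ2⟩ := hπ p hpSD
    rw [Submodule.mem_map] at hπ2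
    obtain ⟨q, _, hq2⟩ := hπ2
    have hcoeff : coeff (Finsupp.equivFunOnFinite.symm
        (gv 0 0 ((a-(S-K))+(c-K)+T) (b-K-T) (d-(S-K)-T) 0 0 0 0 0 0 0)) (π p) = 1 := by
      rw [show π p = p - (p - π p) from (sub_sub_cancel p (π p)).symm, coeff_sub, ← hq2,
        coeff_delta_mul' _ rfl rfl rfl q, hpdef, coeff_Mono]
      simp
    have hπp0 : π p ≠ 0 := by
      intro h
      rw [h, coeff_zero] at hcoeff
      exact zero_ne_one hcoeff
    rw [smul_smul] at happ
    rcases smul_eq_zero.mp happ with h | h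
    · rcases mul_eq_zero.mp h with h' | h'
      · exact h'
      · exact absurd h' hN0
    · exact absurd h hπp0
end
end

section
/- Let a, b, c, d, e, f be nonnegative integers such that s := ((a+c-e)+2(b+d-f))/3 and t := ((a+c-e)-(b+d-f))/3 are integers with t ≥ 0, and let j be an integer satisfying 0 ≤ j, j ≤ s+t, s+t ≤ c+d, 0 ≤ s-j, s-j ≤ d, s+t-j ≤ a, j ≤ b, j ≤ b+t, j ≤ c-t, j ≤ c. Let m := e₁^a · x₃^b · (e₃')^c · (x₁')^d ∈ R₂. Then (μ_e ∘ θ^t ∘ μ_x ∘ β^j ∘ α^{s-j})(m) = λ · e₁^{a-s+j-t} e₃^{c-j-t} x₁^{d-s+j} x₂^{t} x₃^{b-j} for some nonzero constant λ ∈ ℂ; in particular the result is a nonzero monomial lying in S^eD^f. -/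
open MvPolynomial

noncomputable section

/-- the monomial `m = e₁^a · x₃^b · (e₃')^c · (x₁')^d ∈ R₂` -/
def mon (a b c d : ℕ) : R12 :=
  X (ev 0) ^ a * X (xv 2) ^ b * X (ep 2) ^ c * X (xp 0) ^ d


/-! ### Auxiliary lemmas -/

open Equiv

/-- the monomial shape before `μx` -/
def M' (p q r u : ℕ) : R12 := X (ev 0) ^ p * X (xv 2) ^ q * X (ep 2) ^ r * X (xp 0) ^ u

/-- the monomial shape after `μx` -/
def N' (p q w r u : ℕ) : R12 :=
  X (ev 0) ^ p * X (xv 0) ^ q * X (xv 1) ^ w * X (xv 2) ^ r * X (ep 2) ^ u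

lemma mon_eq_M' (a b c d : ℕ) : mon a b c d = M' a b c d := rfl

lemma alpha_step (p q r u : ℕ) :
    α (M' (p+1) q r (u+1)) = (((p+1)*(u+1) : ℕ) : ℂ) • M' p q r u := by
  rw [α, M', Fin.sum_univ_three]
  simp only [LinearMap.add_apply, LinearMap.coe_comp, Derivation.coeFn_coe, Function.comp_apply]
  simp only [pderiv_mul, pderiv_pow, pderiv_X, ev, xv, ep, xp, Pi.single_apply,
    Fin.mk.injEq, Fin.isValue]
  simp only [Fin.ext_iff, Fin.val_zero]
  norm_num [M', ev, xv, ep, xp, Fin.ext_iff]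
  simp only [smul_eq_C_mul, map_add, map_mul, map_one, map_natCast]
  ring

lemma beta_step (p q r u : ℕ) :
    β (M' p (q+1) (r+1) u) = (((q+1)*(r+1) : ℕ) : ℂ) • M' p q r u := by
  rw [β, M', Fin.sum_univ_three]
  simp only [LinearMap.add_apply, LinearMap.coe_comp, Derivation.coeFn_coe, Function.comp_apply]
  simp only [pderiv_mul, pderiv_pow, pderiv_X, ev, xv, ep, xp, Pi.single_apply,
    Fin.mk.injEq, Fin.isValue]
  simp only [Fin.ext_iff, Fin.val_zero]
  norm_num [M', ev, xv, ep, xp, Fin.ext_iff]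
  simp only [smul_eq_C_mul, map_add, map_mul, map_one, map_natCast]
  ring

lemma theta_step (p q w r u : ℕ) :
    θ (N' (p+1) q w r (u+1)) = (-(((p+1)*(u+1) : ℕ) : ℂ)) • N' p q (w+1) r u := by
  rw [θ, show (Finset.univ : Finset (Equiv.Perm (Fin 3))) =
    {1, swap 0 1, swap 0 2, swap 1 2, swap 0 1 * swap 1 2, swap 1 2 * swap 0 1} from by decide]
  rw [Finset.sum_insert (by decide), Finset.sum_insert (by decide),
    Finset.sum_insert (by decide), Finset.sum_insert (by decide),
    Finset.sum_insert (by decide), Finset.sum_singleton]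
  simp only [
    show ((1 : Perm (Fin 3)) 0) = 0 from rfl, show ((1 : Perm (Fin 3)) 1) = 1 from rfl,
    show ((1 : Perm (Fin 3)) 2) = 2 from rfl,
    show (swap (0:Fin 3) 1) 0 = 1 from by decide, show (swap (0:Fin 3) 1) 1 = 0 from by decide,
    show (swap (0:Fin 3) 1) 2 = 2 from by decide,
    show (swap (0:Fin 3) 2) 0 = 2 from by decide, show (swap (0:Fin 3) 2) 1 = 1 from by decide,
    show (swap (0:Fin 3) 2) 2 = 0 from by decide,
    show (swap (1:Fin 3) 2) 0 = 0 from by decide, show (swap (1:Fin 3) 2) 1 = 2 from by decide,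
    show (swap (1:Fin 3) 2) 2 = 1 from by decide,
    show (swap (0:Fin 3) 1 * swap 1 2 : Perm (Fin 3)) 0 = 1 from by decide,
    show (swap (0:Fin 3) 1 * swap 1 2 : Perm (Fin 3)) 1 = 2 from by decide,
    show (swap (0:Fin 3) 1 * swap 1 2 : Perm (Fin 3)) 2 = 0 from by decide,
    show (swap (1:Fin 3) 2 * swap 0 1 : Perm (Fin 3)) 0 = 2 from by decide,
    show (swap (1:Fin 3) 2 * swap 0 1 : Perm (Fin 3)) 1 = 0 from by decide,
    show (swap (1:Fin 3) 2 * swap 0 1 : Perm (Fin 3)) 2 = 1 from by decide,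
    show Perm.sign (1 : Perm (Fin 3)) = 1 from by decide,
    show Perm.sign (swap (0:Fin 3) 1) = -1 from by decide,
    show Perm.sign (swap (0:Fin 3) 2) = -1 from by decide,
    show Perm.sign (swap (1:Fin 3) 2) = -1 from by decide,
    show Perm.sign (swap (0:Fin 3) 1 * swap 1 2) = 1 from by decide,
    show Perm.sign (swap (1:Fin 3) 2 * swap 0 1) = 1 from by decide]
  simp only [N', LinearMap.add_apply, LinearMap.smul_apply, LinearMap.coe_comp,
    Derivation.coeFn_coe, Function.comp_apply, LinearMap.mulLeft_apply]
  simp only [pderiv_mul, pderiv_pow, pderiv_X, ev, xv, ep, xp, Pi.single_apply,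
    Fin.mk.injEq, Fin.isValue]
  simp only [Fin.ext_iff, Fin.val_zero]
  norm_num [Fin.ext_iff]
  simp only [smul_eq_C_mul, map_add, map_mul, map_one, map_natCast, map_neg, map_intCast,
    Units.val_one, Units.val_neg, Int.cast_one, Int.cast_neg, map_ofNat]
  ring

lemma alpha_pow (k : ℕ) : ∀ p q r u : ℕ, ∃ C : ℂ, C ≠ 0 ∧
    (α ^ k) (M' (p+k) q r (u+k)) = C • M' p q r u := by
  induction k with
  | zero => exact fun p q r u => ⟨1, one_ne_zero, by simp⟩
  | succ k ih =>
    intro p q r u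
    obtain ⟨C, hC, h⟩ := ih p q r u
    refine ⟨(((p+k+1)*(u+k+1) : ℕ) : ℂ) * C, mul_ne_zero (Nat.cast_ne_zero.mpr (by positivity)) hC, ?_⟩
    rw [pow_succ, Module.End.mul_apply,
      show M' (p+(k+1)) q r (u+(k+1)) = M' ((p+k)+1) q r ((u+k)+1) by ring_nf,
      alpha_step, map_smul, h, smul_smul]

lemma beta_pow (k : ℕ) : ∀ p q r u : ℕ, ∃ C : ℂ, C ≠ 0 ∧
    (β ^ k) (M' p (q+k) (r+k) u) = C • M' p q r u := by
  induction k with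
  | zero => exact fun p q r u => ⟨1, one_ne_zero, by simp⟩
  | succ k ih =>
    intro p q r u
    obtain ⟨C, hC, h⟩ := ih p q r u
    refine ⟨(((q+k+1)*(r+k+1) : ℕ) : ℂ) * C, mul_ne_zero (Nat.cast_ne_zero.mpr (by positivity)) hC, ?_⟩
    rw [pow_succ, Module.End.mul_apply,
      show M' p (q+(k+1)) (r+(k+1)) u = M' p ((q+k)+1) ((r+k)+1) u by ring_nf,
      beta_step, map_smul, h, smul_smul]

lemma theta_pow (k : ℕ) : ∀ p q w r u : ℕ, ∃ C : ℂ, C ≠ 0 ∧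
    (θ ^ k) (N' (p+k) q w r (u+k)) = C • N' p q (w+k) r u := by
  induction k with
  | zero => exact fun p q w r u => ⟨1, one_ne_zero, by simp⟩
  | succ k ih =>
    intro p q w r u
    obtain ⟨C, hC, h⟩ := ih p q (w+1) r u
    refine ⟨(-(((p+k+1)*(u+k+1) : ℕ) : ℂ)) * C, mul_ne_zero (neg_ne_zero.mpr (Nat.cast_ne_zero.mpr (by positivity))) hC, ?_⟩
    rw [pow_succ, Module.End.mul_apply,
      show N' (p+(k+1)) q w r (u+(k+1)) = N' ((p+k)+1) q w r ((u+k)+1) by ring_nf,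
      theta_step, map_smul, h, smul_smul,
      show w + 1 + k = w + (k+1) by ring]

lemma mux_M' (p q r u : ℕ) : μx (M' p q r u) = N' p u 0 q r := by
  simp only [μx, M', N', map_mul, map_pow, aeval_X, ev, xv, ep, xp]
  norm_num
  ring

lemma mue_N' (p q w r u : ℕ) : μe (N' p q w r u) =
    X (ev 0) ^ p * X (xv 0) ^ q * X (xv 1) ^ w * X (xv 2) ^ r * X (ev 2) ^ u := by
  simp only [μe, N', map_mul, map_pow, aeval_X, ev, xv, ep, xp]
  norm_num

lemma X_pow_wh (w : Fin 12 → ℕ) (i : Fin 12) (n : ℕ) :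
    IsWeightedHomogeneous w ((X i : R12) ^ n) (n * w i) := by
  induction n with
  | zero => simpa using isWeightedHomogeneous_one ℂ w
  | succ n ih =>
    have := ih.mul (isWeightedHomogeneous_X ℂ w i)
    rw [pow_succ]
    convert this using 1 <;> ring


lemma wh_congr {w : Fin 12 → ℕ} {p : R12} {n m : ℕ}
    (h : IsWeightedHomogeneous w p n) (e : n = m) : IsWeightedHomogeneous w p m := e ▸ h


/-- Key monomial computation (case `t ≥ 0`): for `j` satisfying the inequalities of
Theorem 3.1, `(μ_e ∘ θ^t ∘ μ_x ∘ β^j ∘ α^{s-j})(m)` is a nonzero multiple of the monomial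
`e₁^{a-s+j-t} e₃^{c-j-t} x₁^{d-s+j} x₂^t x₃^{b-j}`, which lies in `S^eD^f`. -/
theorem stmt2 (a b c d e f : ℕ) (s t j : ℤ)
    (hs : 3 * s = ((a : ℤ) + c - e) + 2 * ((b : ℤ) + d - f))
    (ht : 3 * t = ((a : ℤ) + c - e) - ((b : ℤ) + d - f))
    (htpos : 0 ≤ t)
    (hj : 0 ≤ j ∧ j ≤ s + t ∧ s + t ≤ (c : ℤ) + d ∧
      0 ≤ s - j ∧ s - j ≤ (d : ℤ) ∧ s + t - j ≤ (a : ℤ) ∧ j ≤ (b : ℤ) ∧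
      j ≤ (b : ℤ) + t ∧ j ≤ (c : ℤ) - t ∧ j ≤ (c : ℤ)) :
    ∃ lam : ℂ, lam ≠ 0 ∧
      μe ((θ ^ t.toNat) (μx ((β ^ j.toNat) ((α ^ (s - j).toNat) (mon a b c d))))) =
        lam • (X (ev 0) ^ ((a : ℤ) - s + j - t).toNat * X (ev 2) ^ ((c : ℤ) - j - t).toNat *
          X (xv 0) ^ ((d : ℤ) - s + j).toNat * X (xv 1) ^ t.toNat *
          X (xv 2) ^ ((b : ℤ) - j).toNat) ∧
      (X (ev 0) ^ ((a : ℤ) - s + j - t).toNat * X (ev 2) ^ ((c : ℤ) - j - t).toNat *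
        X (xv 0) ^ ((d : ℤ) - s + j).toNat * X (xv 1) ^ t.toNat *
        X (xv 2) ^ ((b : ℤ) - j).toNat) ∈ SD2 e f := by
  obtain ⟨h0j, hjst, hstcd, h0sj, hsjd, hstja, hjb', hjbt, hjct, hjc'⟩ := hj
  set k := (s - j).toNat with hk
  set jn := j.toNat with hjn
  set tn := t.toNat with htn
  have hkz : (k : ℤ) = s - j := Int.toNat_of_nonneg h0sj
  have hjz : (jn : ℤ) = j := Int.toNat_of_nonneg h0j
  have htz : (tn : ℤ) = t := Int.toNat_of_nonneg htpos
  have hka : k ≤ a := by omega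
  have hkd : k ≤ d := by omega
  have hjb : jn ≤ b := by omega
  have hjc : jn ≤ c := by omega
  have hta : tn ≤ a - k := by omega
  have htc : tn ≤ c - jn := by omega
  have eA : ((a : ℤ) - s + j - t).toNat = a - k - tn := by omega
  have eB : ((c : ℤ) - j - t).toNat = c - jn - tn := by omega
  have eC : ((d : ℤ) - s + j).toNat = d - k := by omega
  have eE : ((b : ℤ) - j).toNat = b - jn := by omega
  obtain ⟨C1, hC1, h1⟩ := alpha_pow k (a-k) b c (d-k)
  obtain ⟨C2, hC2, h2⟩ := beta_pow jn (a-k) (b-jn) (c-jn) (d-k)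
  obtain ⟨C3, hC3, h3⟩ := theta_pow tn (a-k-tn) (d-k) 0 (b-jn) (c-jn-tn)
  have e1 : mon a b c d = M' ((a-k)+k) b c ((d-k)+k) := by
    rw [mon_eq_M', Nat.sub_add_cancel hka, Nat.sub_add_cancel hkd]
  have e2 : M' (a-k) b c (d-k) = M' (a-k) ((b-jn)+jn) ((c-jn)+jn) (d-k) := by
    rw [Nat.sub_add_cancel hjb, Nat.sub_add_cancel hjc]
  have e3 : N' (a-k) (d-k) 0 (b-jn) (c-jn)
      = N' ((a-k-tn)+tn) (d-k) 0 (b-jn) ((c-jn-tn)+tn) := by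
    rw [Nat.sub_add_cancel hta, Nat.sub_add_cancel htc]
  have s5 : μe ((θ ^ tn) (μx ((β ^ jn) ((α ^ k) (mon a b c d)))))
      = C1 • (C2 • (C3 • (X (ev 0) ^ (a-k-tn) * X (xv 0) ^ (d-k) * X (xv 1) ^ (0+tn)
          * X (xv 2) ^ (b-jn) * X (ev 2) ^ (c-jn-tn)))) := by
    rw [e1, h1]
    simp only [map_smul]
    rw [e2, h2]
    simp only [map_smul]
    rw [mux_M', e3, h3]
    simp only [map_smul]
    rw [mue_N']
  refine ⟨C1 * C2 * C3, mul_ne_zero (mul_ne_zero hC1 hC2) hC3, ?_, ?_⟩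
  · rw [s5, smul_smul, smul_smul, eA, eB, eC, eE]
    refine congrArg (fun x => (C1 * C2 * C3) • x) ?_
    rw [zero_add]
    ring
  · simp only [SD2, SD4, Submodule.mem_inf, mem_weightedHomogeneousSubmodule]
    have hwh : ∀ w : Fin 12 → ℕ,
        IsWeightedHomogeneous w
          (X (ev 0) ^ ((a : ℤ) - s + j - t).toNat * X (ev 2) ^ ((c : ℤ) - j - t).toNat *
            X (xv 0) ^ ((d : ℤ) - s + j).toNat * X (xv 1) ^ tn *
            X (xv 2) ^ ((b : ℤ) - j).toNat)
          (((a : ℤ) - s + j - t).toNat * w (ev 0) + ((c : ℤ) - j - t).toNat * w (ev 2) +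
            ((d : ℤ) - s + j).toNat * w (xv 0) + tn * w (xv 1) +
            ((b : ℤ) - j).toNat * w (xv 2)) := fun w =>
      ((((X_pow_wh w _ _).mul (X_pow_wh w _ _)).mul (X_pow_wh w _ _)).mul
        (X_pow_wh w _ _)).mul (X_pow_wh w _ _)
    refine ⟨⟨⟨wh_congr (hwh wE) ?_, wh_congr (hwh wX) ?_⟩, wh_congr (hwh wEp) ?_⟩,
      wh_congr (hwh wXp) ?_⟩ <;>
      · simp only [wE, wX, wEp, wXp, ev, xv]
        norm_num
        try omega
end
end

section
/- Let a, b, c, d, e, f be nonnegative integers and let s, t, j be integers with 3s = (a + c − e) + 2(b + d − f) and 3t = (a + c − e) − (b + d − f). Then the following are equivalent: (I) there exist nonnegative integers p₁, p₂, p₃, q₁, q₂, q₃ with p₃ = j satisfying all of: p₂ ≤ a; p₃ ≤ b; p₂ + q₂ − a ≤ p₁; p₃ + q₃ − b ≤ p₂; q₁ = 0; q₂ ≤ p₁; q₂ + q₃ ≤ p₁ + p₂; p₁ + p₂ + p₃ = c + d; q₁ + q₂ + q₃ = d; a + b + p₁ = e + f + s; b + p₂ + q₂ = f + s; p₃ +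 q₃ = s. (II) j satisfies all of: 0 ≤ j; j ≤ s + t; s + t ≤ c + d; 0 ≤ s − j; s − j ≤ d; s + t − j ≤ a; j ≤ b; j ≤ b + t; j ≤ c − t; j ≤ c. -/
/-- Proposition 2.4 of the paper (pure integer arithmetic): given `3s = (a+c-e)+2(b+d-f)` and
`3t = (a+c-e)-(b+d-f)`, there exists a `μ`-expansion of `λ = (a+b,b,0)` by `μ = (c+d,d,0)` of
shape `ν = (e+f+s,f+s,s)` with `p₃ = j` (characterized by the inequalities of Lemma 2.2) if and
only if `j` satisfies the listed inequalities. -/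
theorem stmt9 (a b c d e f : ℕ) (s t j : ℤ)
    (hs : 3 * s = ((a : ℤ) + c - e) + 2 * ((b : ℤ) + d - f))
    (ht : 3 * t = ((a : ℤ) + c - e) - ((b : ℤ) + d - f)) :
    (∃ p1 p2 p3 q1 q2 q3 : ℕ,
      (p3 : ℤ) = j ∧
      p2 ≤ a ∧
      p3 ≤ b ∧
      (p2 : ℤ) + q2 - a ≤ p1 ∧
      (p3 : ℤ) + q3 - b ≤ p2 ∧
      q1 = 0 ∧
      q2 ≤ p1 ∧
      q2 + q3 ≤ p1 + p2 ∧
      p1 + p2 + p3 = c + d ∧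
      q1 + q2 + q3 = d ∧
      (a : ℤ) + b + p1 = e + f + s ∧
      (b : ℤ) + p2 + q2 = f + s ∧
      (p3 : ℤ) + q3 = s)
    ↔ (0 ≤ j ∧ j ≤ s + t ∧ s + t ≤ (c : ℤ) + d ∧
       0 ≤ s - j ∧ s - j ≤ (d : ℤ) ∧
       s + t - j ≤ (a : ℤ) ∧ j ≤ (b : ℤ) ∧ j ≤ (b : ℤ) + t ∧
       j ≤ (c : ℤ) - t ∧ j ≤ (c : ℤ)) := by
  constructor
  · rintro ⟨p1, p2, p3, q1, q2, q3, h1, h2, h3, h4, h5, h6, h7, h8, h9, h10, h11, h12, h13⟩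
    omega
  · rintro ⟨h1, h2, h3, h4, h5, h6, h7, h8, h9, h10⟩
    exact ⟨(c + d - s - t).toNat, (s + t - j).toNat, j.toNat, 0,
      (d - s + j).toNat, (s - j).toNat, by omega, by omega, by omega, by omega, by omega,
      by omega, by omega, by omega, by omega, by omega, by omega, by omega, by omega⟩
end

section
/- Let d₁, d₂, n be nonnegative integers with n ≤ min(d₁, d₂). Then: (1) for all f ∈ V(d₁) and g ∈ V(d₂), the transvectant ψ_n(f,g) lies in V(d₁+d₂−2n); (2) ψ_n : V(d₁) × V(d₂) → V(d₁+d₂−2n) is ℂ-bilinear; (3) ψ_n is SL₂(ℂ)-equivariant, i.e. ψ_n(A·f, A·g) = A·ψ_n(f,g) for all A ∈ SL₂(ℂ); (4) ψ_n is onto, i.e. the ℂ-span of { ψ_n(f,g) : f ∈ V(d₁), g ∈ V(d₂) } is all of V(d₁+d₂−2n). -/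
open MvPolynomial

noncomputable section

open scoped MatrixGroups

/-- the polynomial ring `ℂ[z₁,z₂]` -/
abbrev P2 : Type := MvPolynomial (Fin 2) ℂ

/-- `V(d) = Sym^d(ℂ²)`: homogeneous polynomials of degree `d` in `z₁, z₂` -/
def Vd (d : ℕ) : Submodule ℂ P2 := homogeneousSubmodule (Fin 2) ℂ d

/-- The action of `SL₂(ℂ)` on polynomials by linear substitution, `(A·f)(z) = f(A⁻¹z)`. -/
def ρ (A : SL(2, ℂ)) : P2 →ₐ[ℂ] P2 :=
  aeval (fun i : Fin 2 => ∑ j : Fin 2, ((A⁻¹).val i j) • X j)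

/-- the `n`-th transvectant
`ψ_n(f,g) = ((d₁−n)!/d₁!)((d₂−n)!/d₂!) Σᵢ (−1)ⁱ C(n,i) (∂ⁿf/∂z₁^{n−i}∂z₂^{i})·(∂ⁿg/∂z₁^{i}∂z₂^{n−i})` -/
def ψ (d₁ d₂ n : ℕ) (f g : P2) : P2 :=
  ((((d₁ - n).factorial : ℂ) / (d₁.factorial : ℂ)) *
    (((d₂ - n).factorial : ℂ) / (d₂.factorial : ℂ))) •
  ∑ i ∈ Finset.range (n + 1), ((-1 : ℂ) ^ i * (n.choose i : ℂ)) •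
    ((((pderiv (0 : Fin 2)).toLinearMap ^ (n - i)) (((pderiv (1 : Fin 2)).toLinearMap ^ i) f)) *
     (((pderiv (0 : Fin 2)).toLinearMap ^ i) (((pderiv (1 : Fin 2)).toLinearMap ^ (n - i)) g)))

abbrev W2 : Type := MvPolynomial (Fin 2 ⊕ Fin 2) ℂ

lemma desc_succ' (n k : ℕ) : n.descFactorial (k+1) = n * (n-1).descFactorial k := by
  cases n with
  | zero => simp
  | succ m => rw [Nat.succ_descFactorial_succ]; rfl

lemma pderiv_comm' {σ : Type*} [DecidableEq σ] {R : Type*} [CommSemiring R] (i j : σ)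
    (p : MvPolynomial σ R) : pderiv i (pderiv j p) = pderiv j (pderiv i p) := by
  induction p using MvPolynomial.induction_on' with
  | monomial m a =>
    simp only [pderiv_monomial]
    rcases eq_or_ne i j with rfl | hij
    · rfl
    · rw [tsub_tsub, tsub_tsub, add_comm]
      congr 1
      rw [Finsupp.tsub_apply, Finsupp.tsub_apply, Finsupp.single_apply, Finsupp.single_apply,
        if_neg hij, if_neg (Ne.symm hij)]
      simp only [Nat.sub_zero]; ring
  | add p q hp hq => simp [hp, hq]

lemma pderiv_pow_monomial {σ : Type*} [DecidableEq σ] (i : σ) (k : ℕ) (m : σ →₀ ℕ) (a : ℂ) :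
    (((pderiv i).toLinearMap : MvPolynomial σ ℂ →ₗ[ℂ] MvPolynomial σ ℂ) ^ k) (monomial m a) =
      monomial (m - Finsupp.single i k) (a * ((m i).descFactorial k)) := by
  induction k generalizing m a with
  | zero => simp
  | succ k ih =>
    rw [pow_succ, Module.End.mul_apply, Derivation.coeFn_coe, pderiv_monomial, ih]
    rw [tsub_tsub, ← Finsupp.single_add]
    have h1 : ((m - Finsupp.single i 1) : σ →₀ ℕ) i = m i - 1 := by
      simp [Finsupp.tsub_apply]
    rw [h1]
    congr 1
    · rw [add_comm 1 k]
    · rw [desc_succ' (m i) k]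
      push_cast
      ring

lemma deg2 (m : Fin 2 →₀ ℕ) : m.degree = m 0 + m 1 := by
  rw [Finsupp.degree_apply, Finset.sum_subset (Finset.subset_univ m.support)]
  · rw [Fin.sum_univ_two]
  · intro x _ hx
    simpa using Finsupp.notMem_support_iff.mp hx

lemma isHom_pderiv {d : ℕ} (i : Fin 2) {f : MvPolynomial (Fin 2) ℂ} (hf : f.IsHomogeneous d) :
    (pderiv i f).IsHomogeneous (d - 1) := by
  rw [MvPolynomial.as_sum f, map_sum]
  apply MvPolynomial.IsHomogeneous.sum
  intro m hm
  rw [pderiv_monomial]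
  by_cases h0 : m i = 0
  · simp only [h0, Nat.cast_zero, mul_zero, map_zero]
    exact MvPolynomial.isHomogeneous_zero _ _ _
  · apply MvPolynomial.isHomogeneous_monomial
    have hdeg : m.degree = d := by
      rw [Finsupp.degree_eq_weight_one]
      exact hf (MvPolynomial.mem_support_iff.mp hm)
    rw [deg2] at hdeg ⊢
    rw [Finsupp.tsub_apply, Finsupp.tsub_apply, Finsupp.single_apply, Finsupp.single_apply]
    fin_cases i <;> simp_all <;> omega

lemma isHom_pderiv_pow {d : ℕ} (i : Fin 2) (k : ℕ) {f : MvPolynomial (Fin 2) ℂ}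
    (hf : f.IsHomogeneous d) :
    ((((pderiv i).toLinearMap : MvPolynomial (Fin 2) ℂ →ₗ[ℂ] MvPolynomial (Fin 2) ℂ) ^ k) f).IsHomogeneous (d - k) := by
  induction k generalizing d f with
  | zero => simpa using hf
  | succ k ih =>
    rw [pow_succ, Module.End.mul_apply]
    have := ih (isHom_pderiv i hf)
    rwa [show d - 1 - k = d - (k + 1) by omega] at this

lemma chain_rule {σ : Type*} [Fintype σ] [DecidableEq σ] (v : σ → MvPolynomial σ ℂ)
    (c : σ → σ → ℂ) (hv : ∀ i k, pderiv k (v i) = C (c i k)) (k : σ) (p : MvPolynomial σ ℂ) :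
    pderiv k (aeval v p) = ∑ i, C (c i k) * aeval v (pderiv i p) := by
  induction p using MvPolynomial.induction_on with
  | C a => simp [pderiv_C]
  | add p q hp hq => simp only [map_add, hp, hq, mul_add, Finset.sum_add_distrib]
  | mul_X p j hp =>
    rw [map_mul, aeval_X, pderiv_mul, hp, hv, Finset.sum_mul]
    have : ∀ i ∈ Finset.univ, C (c i k) * aeval v (pderiv i (p * X j))
        = C (c i k) * aeval v (pderiv i p) * v j
          + (if j = i then C (c i k) * aeval v p else 0) := by
      intro i _
      rw [pderiv_mul]
      rcases eq_or_ne j i with rfl | h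
      · simp only [pderiv_X_self, mul_one, map_add, map_mul, aeval_X, if_pos rfl, if_true,
          eq_self_iff_true]
        ring
      · rw [pderiv_X_of_ne h]
        simp [h, mul_assoc]
    rw [Finset.sum_congr rfl this, Finset.sum_add_distrib, Finset.sum_ite_eq,
      if_pos (Finset.mem_univ j)]
    ring

/-- embedding of a pair into the double polynomial ring -/
def Φ (f g : P2) : W2 := rename Sum.inl f * rename Sum.inr g

/-- the contraction `y := x` -/
def μW : W2 →ₐ[ℂ] P2 := aeval (Sum.elim X X)

def Lw (s : Fin 2 ⊕ Fin 2) : W2 →ₗ[ℂ] W2 := (pderiv s).toLinearMap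

def Dl (i : Fin 2) : P2 →ₗ[ℂ] P2 := (pderiv i).toLinearMap

/-- Cayley's omega operator -/
def ΩW : W2 →ₗ[ℂ] W2 :=
  Lw (Sum.inl 0) * Lw (Sum.inr 1) - Lw (Sum.inl 1) * Lw (Sum.inr 0)

lemma μW_Φ (f g : P2) : μW (Φ f g) = f * g := by
  rw [Φ, map_mul, μW, aeval_rename, aeval_rename]
  simp [Function.comp_def, aeval_X_left_apply]

lemma Lw_inl (j : Fin 2) (f g : P2) : Lw (Sum.inl j) (Φ f g) = Φ (Dl j f) g := by
  have hvars : Sum.inl j ∉ (rename (Sum.inr : Fin 2 → Fin 2 ⊕ Fin 2) g).vars := by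
    intro h
    rcases Finset.mem_image.mp (vars_rename _ _ h) with ⟨x, -, hx⟩
    exact Sum.inl_ne_inr hx.symm
  show pderiv (Sum.inl j) _ = _
  rw [Φ, pderiv_mul, pderiv_rename Sum.inl_injective,
    pderiv_eq_zero_of_notMem_vars hvars, mul_zero, add_zero]
  rfl

lemma Lw_inr (j : Fin 2) (f g : P2) : Lw (Sum.inr j) (Φ f g) = Φ f (Dl j g) := by
  have hvars : Sum.inr j ∉ (rename (Sum.inl : Fin 2 → Fin 2 ⊕ Fin 2) f).vars := by
    intro h
    rcases Finset.mem_image.mp (vars_rename _ _ h) with ⟨x, -, hx⟩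
    exact Sum.inl_ne_inr hx
  show pderiv (Sum.inr j) _ = _
  rw [Φ, pderiv_mul, pderiv_rename Sum.inr_injective,
    pderiv_eq_zero_of_notMem_vars hvars, zero_mul, zero_add]
  rfl

lemma PQ_apply (m : ℕ) (f g : P2) :
    ((Lw (Sum.inl 0) * Lw (Sum.inr 1)) ^ m) (Φ f g) = Φ ((Dl 0 ^ m) f) ((Dl 1 ^ m) g) ∧
    ((Lw (Sum.inl 1) * Lw (Sum.inr 0)) ^ m) (Φ f g) = Φ ((Dl 1 ^ m) f) ((Dl 0 ^ m) g) := by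
  induction m generalizing f g with
  | zero => simp
  | succ m ih =>
    constructor
    · rw [pow_succ, Module.End.mul_apply, Module.End.mul_apply, Lw_inr, Lw_inl, (ih _ _).1,
        pow_succ, pow_succ, Module.End.mul_apply, Module.End.mul_apply]
    · rw [pow_succ, Module.End.mul_apply, Module.End.mul_apply, Lw_inr, Lw_inl, (ih _ _).2,
        pow_succ, pow_succ, Module.End.mul_apply, Module.End.mul_apply]

lemma neg_pow_apply {M : Type*} [AddCommGroup M] [Module ℂ M] (T : M →ₗ[ℂ] M) (k : ℕ) (v : M) :
    ((-T) ^ k) v = ((-1 : ℂ) ^ k) • ((T ^ k) v) := by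
  induction k generalizing v with
  | zero => simp
  | succ k ih =>
    have h2 : ((T ^ (k + 1)) v) = (T ^ k) (T v) := by rw [pow_succ, Module.End.mul_apply]
    rw [pow_succ, Module.End.mul_apply, LinearMap.neg_apply, ih, map_neg, smul_neg,
      pow_succ, h2, mul_neg_one, neg_smul]

lemma commute_Lw (s t : Fin 2 ⊕ Fin 2) : Commute (Lw s) (Lw t) := by
  apply LinearMap.ext
  intro F
  exact pderiv_comm' s t F

lemma commute_Dl (i j : Fin 2) : Commute (Dl i) (Dl j) := by
  apply LinearMap.ext
  intro F
  exact pderiv_comm' i j F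

lemma Dl_swap (a b : ℕ) (g : P2) : (Dl 1 ^ a) ((Dl 0 ^ b) g) = (Dl 0 ^ b) ((Dl 1 ^ a) g) := by
  have := ((commute_Dl 1 0).pow_pow a b)
  calc (Dl 1 ^ a) ((Dl 0 ^ b) g) = (Dl 1 ^ a * Dl 0 ^ b) g := rfl
    _ = (Dl 0 ^ b * Dl 1 ^ a) g := by rw [this]
    _ = _ := rfl

lemma Omega_pow_Phi (n : ℕ) (f g : P2) :
    (ΩW ^ n) (Φ f g) = ∑ i ∈ Finset.range (n + 1), ((-1 : ℂ) ^ i * (n.choose i : ℂ)) •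
      Φ ((Dl 0 ^ (n - i)) ((Dl 1 ^ i) f)) ((Dl 0 ^ i) ((Dl 1 ^ (n - i)) g)) := by
  set P : Module.End ℂ W2 := Lw (Sum.inl 0) * Lw (Sum.inr 1) with hP
  set Q : Module.End ℂ W2 := Lw (Sum.inl 1) * Lw (Sum.inr 0) with hQ
  have hPQ0 : P * Q = Q * P :=
    (((commute_Lw _ _).mul_right (commute_Lw _ _))).mul_left
      (((commute_Lw _ _).mul_right (commute_Lw _ _)))
  have hPQ : Commute P (-Q) := by
    apply LinearMap.ext
    intro v
    show P (-(Q v)) = -(Q (P v))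
    rw [map_neg]
    exact congrArg Neg.neg (LinearMap.congr_fun hPQ0 v)
  have hΩ : ΩW = P + -Q := by rw [ΩW, sub_eq_add_neg]
  rw [hΩ, hPQ.add_pow, LinearMap.sum_apply]
  rw [← Finset.sum_range_reflect
    (fun i => ((-1 : ℂ) ^ i * (n.choose i : ℂ)) •
      Φ ((Dl 0 ^ (n - i)) ((Dl 1 ^ i) f)) ((Dl 0 ^ i) ((Dl 1 ^ (n - i)) g))) (n + 1)]
  refine Finset.sum_congr rfl fun m hm => ?_
  have hmn : m ≤ n := by simpa [Nat.lt_succ_iff] using hm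
  have h1 : n + 1 - 1 - m = n - m := by omega
  rw [h1]
  rw [Module.End.mul_apply, Module.End.mul_apply, Module.End.natCast_apply,
    ← Nat.cast_smul_eq_nsmul ℂ, map_smul, map_smul, neg_pow_apply, map_smul,
    (PQ_apply _ _ _).2, (PQ_apply _ _ _).1, Nat.sub_sub_self hmn, Nat.choose_symm hmn, Dl_swap,
    smul_smul, mul_comm]

/-- the diagonal action on the doubled ring -/
def ρW (A : SL(2, ℂ)) : W2 →ₐ[ℂ] W2 :=
  aeval (Sum.elim (fun i : Fin 2 => ∑ j : Fin 2, ((A⁻¹).val i j) • X (Sum.inl j))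
    (fun i : Fin 2 => ∑ j : Fin 2, ((A⁻¹).val i j) • X (Sum.inr j)))

def cB (B : Matrix (Fin 2) (Fin 2) ℂ) : (Fin 2 ⊕ Fin 2) → (Fin 2 ⊕ Fin 2) → ℂ
  | Sum.inl i, Sum.inl k => B i k
  | Sum.inr i, Sum.inr k => B i k
  | _, _ => 0

lemma pderiv_sum_smul_X {σ : Type*} [DecidableEq σ] (b : Fin 2 → ℂ) (u : Fin 2 → σ)
    (t : σ) :
    pderiv t (∑ j, b j • X (u j) : MvPolynomial σ ℂ) =
      C ((if t = u 0 then b 0 else 0) + (if t = u 1 then b 1 else 0)) := by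
  rw [Fin.sum_univ_two, map_add, Derivation.map_smul, Derivation.map_smul, map_add]
  congr 1 <;>
  · rcases eq_or_ne t (u _) with h | h
    · rw [h, pderiv_X_self, if_pos rfl]
      rw [smul_eq_C_mul, mul_one]
    · rw [pderiv_X_of_ne (Ne.symm h), if_neg h, smul_zero, map_zero]

lemma pderiv_ρW (A : SL(2, ℂ)) (t : Fin 2 ⊕ Fin 2) (F : W2) :
    pderiv t (ρW A F) = ∑ s, C (cB (A⁻¹).1 s t) * ρW A (pderiv s F) := by
  apply chain_rule
  intro s t
  rcases s with i | i <;> rcases t with k | k <;>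
    simp only [Sum.elim_inl, Sum.elim_inr, pderiv_sum_smul_X, cB, Sum.inl.injEq, Sum.inr.injEq,
      reduceCtorEq, if_false] <;>
    congr 1 <;>
    fin_cases k <;> simp

lemma detB (A : SL(2, ℂ)) :
    (A⁻¹).1 0 0 * (A⁻¹).1 1 1 - (A⁻¹).1 0 1 * (A⁻¹).1 1 0 = 1 := by
  have := (A⁻¹).2
  rwa [Matrix.det_fin_two] at this

lemma Omega_ρW (A : SL(2, ℂ)) (F : W2) : ΩW (ρW A F) = ρW A (ΩW F) := by
  have hC : C ((A⁻¹).1 0 0) * C ((A⁻¹).1 1 1) - C ((A⁻¹).1 0 1) * C ((A⁻¹).1 1 0) = (1 : W2) := by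
    rw [← map_mul, ← map_mul, ← map_sub, detB, map_one]
  have hΩapp : ∀ G : W2, ΩW G =
      pderiv (Sum.inl 0) (pderiv (Sum.inr 1) G) - pderiv (Sum.inl 1) (pderiv (Sum.inr 0) G) :=
    fun G => rfl
  rw [hΩapp, hΩapp, pderiv_ρW, pderiv_ρW]
  simp only [Fintype.sum_sum_type, Fin.sum_univ_two, cB, map_zero, zero_mul, add_zero, zero_add,
    map_add, map_sub, pderiv_C_mul, pderiv_ρW, mul_add]
  linear_combination (ρW A (pderiv (Sum.inl 0) (pderiv (Sum.inr 1) F))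
    - ρW A (pderiv (Sum.inl 1) (pderiv (Sum.inr 0) F))) * hC

lemma Omega_pow_ρW (A : SL(2, ℂ)) (n : ℕ) (F : W2) :
    (ΩW ^ n) (ρW A F) = ρW A ((ΩW ^ n) F) := by
  induction n generalizing F with
  | zero => simp
  | succ n ih =>
    rw [pow_succ, Module.End.mul_apply, Module.End.mul_apply]
    rw [show ΩW (ρW A F) = ρW A (ΩW F) from Omega_ρW A F, ih]

lemma rename_inl_ρ (A : SL(2, ℂ)) (f : P2) :
    rename Sum.inl (ρ A f) = ρW A (rename Sum.inl f) := by
  have : (rename (Sum.inl : Fin 2 → Fin 2 ⊕ Fin 2)).comp (ρ A)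
      = (ρW A).comp (rename Sum.inl) := by
    apply MvPolynomial.algHom_ext
    intro i
    simp [ρ, ρW, map_sum]
  exact DFunLike.congr_fun this f

lemma rename_inr_ρ (A : SL(2, ℂ)) (g : P2) :
    rename Sum.inr (ρ A g) = ρW A (rename Sum.inr g) := by
  have : (rename (Sum.inr : Fin 2 → Fin 2 ⊕ Fin 2)).comp (ρ A)
      = (ρW A).comp (rename Sum.inr) := by
    apply MvPolynomial.algHom_ext
    intro i
    simp [ρ, ρW, map_sum]
  exact DFunLike.congr_fun this g

lemma Φ_ρ (A : SL(2, ℂ)) (f g : P2) : Φ (ρ A f) (ρ A g) = ρW A (Φ f g) := by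
  rw [Φ, Φ, map_mul, rename_inl_ρ, rename_inr_ρ]

lemma μW_ρW (A : SL(2, ℂ)) (F : W2) : μW (ρW A F) = ρ A (μW F) := by
  have : (μW).comp (ρW A) = (ρ A).comp μW := by
    apply MvPolynomial.algHom_ext
    intro s
    rcases s with i | i <;> simp [ρ, ρW, μW, map_sum]
  exact DFunLike.congr_fun this F

lemma Sn_eq (n : ℕ) (f g : P2) :
    ∑ i ∈ Finset.range (n + 1), ((-1 : ℂ) ^ i * (n.choose i : ℂ)) •
      ((Dl 0 ^ (n - i)) ((Dl 1 ^ i) f) * (Dl 0 ^ i) ((Dl 1 ^ (n - i)) g))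
      = μW ((ΩW ^ n) (Φ f g)) := by
  rw [Omega_pow_Phi, map_sum]
  refine Finset.sum_congr rfl fun i _ => ?_
  rw [map_smul, μW_Φ]

lemma Sn_equivariant (A : SL(2, ℂ)) (n : ℕ) (f g : P2) :
    ∑ i ∈ Finset.range (n + 1), ((-1 : ℂ) ^ i * (n.choose i : ℂ)) •
      ((Dl 0 ^ (n - i)) ((Dl 1 ^ i) (ρ A f)) * (Dl 0 ^ i) ((Dl 1 ^ (n - i)) (ρ A g)))
      = ρ A (∑ i ∈ Finset.range (n + 1), ((-1 : ℂ) ^ i * (n.choose i : ℂ)) •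
      ((Dl 0 ^ (n - i)) ((Dl 1 ^ i) f) * (Dl 0 ^ i) ((Dl 1 ^ (n - i)) g))) := by
  rw [Sn_eq, Sn_eq, Φ_ρ, Omega_pow_ρW, μW_ρW]

lemma ψ_eq (d₁ d₂ n : ℕ) (f g : P2) : ψ d₁ d₂ n f g =
    ((((d₁ - n).factorial : ℂ) / (d₁.factorial : ℂ)) *
      (((d₂ - n).factorial : ℂ) / (d₂.factorial : ℂ))) •
    ∑ i ∈ Finset.range (n + 1), ((-1 : ℂ) ^ i * (n.choose i : ℂ)) •
      ((Dl 0 ^ (n - i)) ((Dl 1 ^ i) f) * (Dl 0 ^ i) ((Dl 1 ^ (n - i)) g)) := rfl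

lemma Dl_pow_monomial (i : Fin 2) (k : ℕ) (m : Fin 2 →₀ ℕ) (c : ℂ) :
    (Dl i ^ k) (monomial m c) = monomial (m - Finsupp.single i k) (c * ((m i).descFactorial k)) :=
  pderiv_pow_monomial i k m c

lemma ext2 {m m' : Fin 2 →₀ ℕ} (h0 : m 0 = m' 0) (h1 : m 1 = m' 1) : m = m' := by
  ext a
  fin_cases a <;> assumption

lemma scalar_ne (d₁ d₂ n : ℕ) :
    ((((d₁ - n).factorial : ℂ) / (d₁.factorial : ℂ)) *
      (((d₂ - n).factorial : ℂ) / (d₂.factorial : ℂ))) ≠ 0 := by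
  apply mul_ne_zero <;>
  · apply div_ne_zero <;> exact_mod_cast Nat.factorial_ne_zero _

lemma exists_psi (d₁ d₂ n a b : ℕ) (hn : n ≤ min d₁ d₂) (hab : a + b = d₁ + d₂ - 2 * n) :
    ∃ f ∈ homogeneousSubmodule (Fin 2) ℂ d₁, ∃ g ∈ homogeneousSubmodule (Fin 2) ℂ d₂,
      ∃ κ : ℂ, κ ≠ 0 ∧
        ψ d₁ d₂ n f g = monomial (Finsupp.single 0 a + Finsupp.single 1 b) κ := by
  have hn1 : n ≤ d₁ := le_trans hn (min_le_left _ _)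
  have hn2 : n ≤ d₂ := le_trans hn (min_le_right _ _)
  by_cases hp : a + n ≤ d₁
  -- family 2 : f = X0^(a+n) X1^(d₁-a-n), g = X1^d₂, only i = 0 survives
  · set p : ℕ := a + n with hpdef
    refine ⟨monomial (Finsupp.single 0 p + Finsupp.single 1 (d₁ - p)) 1, ?_,
      monomial (Finsupp.single 1 d₂) 1, ?_, ?_⟩
    · apply isHomogeneous_monomial
      rw [deg2]; simp [Finsupp.single_apply]; omega
    · apply isHomogeneous_monomial
      rw [deg2]; simp [Finsupp.single_apply]
    · rw [ψ_eq, Finset.sum_eq_single_of_mem 0 (Finset.mem_range.2 (Nat.succ_pos n))]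
      · simp only [pow_zero, Module.End.one_apply, Nat.sub_zero, Nat.choose_zero_right,
          Nat.cast_one, one_mul, one_smul]
        rw [show ∀ k (m : Fin 2 →₀ ℕ) (c : ℂ), (Dl 0 ^ k) (monomial m c)
            = monomial (m - Finsupp.single 0 k) (c * ((m 0).descFactorial k))
          from fun k m c => pderiv_pow_monomial 0 k m c]
        rw [show ∀ k (m : Fin 2 →₀ ℕ) (c : ℂ), (Dl 1 ^ k) (monomial m c)
            = monomial (m - Finsupp.single 1 k) (c * ((m 1).descFactorial k))
          from fun k m c => pderiv_pow_monomial 1 k m c]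
        rw [monomial_mul, smul_monomial]
        have hE : ((Finsupp.single 0 p + Finsupp.single 1 (d₁ - p)) - Finsupp.single 0 n)
            + (Finsupp.single 1 d₂ - Finsupp.single 1 n)
            = Finsupp.single 0 a + Finsupp.single (1 : Fin 2) b := by
          apply ext2 <;>
            simp [Finsupp.add_apply, Finsupp.tsub_apply, Finsupp.single_apply] <;> omega
        rw [hE]
        refine ⟨_, ?_, rfl⟩
        simp only [Finsupp.add_apply, Finsupp.tsub_apply, Finsupp.single_apply, one_mul]
        have h1 : (p.descFactorial n : ℂ) ≠ 0 := by
          rw [Nat.cast_ne_zero, Ne, Nat.descFactorial_eq_zero_iff_lt]; omega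
        have h2 : (d₂.descFactorial n : ℂ) ≠ 0 := by
          rw [Nat.cast_ne_zero, Ne, Nat.descFactorial_eq_zero_iff_lt]; omega
        simp only [if_true, show ¬((1 : Fin 2) = 0) by decide, if_false, add_zero, smul_eq_mul]
        exact mul_ne_zero (scalar_ne d₁ d₂ n) (mul_ne_zero h1 h2)
      · intro i _ hi0
        have hz : (0 : ℕ).descFactorial i = 0 :=
          Nat.descFactorial_eq_zero_iff_lt.mpr (Nat.pos_of_ne_zero hi0)
        have hc : (((Finsupp.single 1 d₂ - Finsupp.single 1 (n - i)) : Fin 2 →₀ ℕ)) 0 = 0 := by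
          simp [Finsupp.tsub_apply, Finsupp.single_apply]
        simp only [Dl_pow_monomial, hc, hz]
        simp
  -- family 1 : f = X0^d₁, g = X0^q X1^(d₂-q), only i = 0 survives
  · set q : ℕ := a + n - d₁ with hqdef
    have hq : q ≤ d₂ - n := by omega
    refine ⟨monomial (Finsupp.single 0 d₁) 1, ?_,
      monomial (Finsupp.single 0 q + Finsupp.single 1 (d₂ - q)) 1, ?_, ?_⟩
    · apply isHomogeneous_monomial
      rw [deg2]; simp [Finsupp.single_apply]
    · apply isHomogeneous_monomial
      rw [deg2]; simp [Finsupp.single_apply]; omega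
    · rw [ψ_eq, Finset.sum_eq_single_of_mem 0 (Finset.mem_range.2 (Nat.succ_pos n))]
      · simp only [pow_zero, Module.End.one_apply, Nat.sub_zero, Nat.choose_zero_right,
          Nat.cast_one, one_mul, one_smul]
        simp only [Dl_pow_monomial]
        rw [monomial_mul, smul_monomial]
        have hE : ((Finsupp.single 0 d₁ : Fin 2 →₀ ℕ) - Finsupp.single 0 n)
            + ((Finsupp.single 0 q + Finsupp.single 1 (d₂ - q)) - Finsupp.single 1 n)
            = Finsupp.single 0 a + Finsupp.single (1 : Fin 2) b := by
          apply ext2 <;>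
            simp [Finsupp.add_apply, Finsupp.tsub_apply, Finsupp.single_apply] <;> omega
        rw [hE]
        refine ⟨_, ?_, rfl⟩
        have h1 : (d₁.descFactorial n : ℂ) ≠ 0 := by
          rw [Nat.cast_ne_zero, Ne, Nat.descFactorial_eq_zero_iff_lt]; omega
        have h2 : ((d₂ - q).descFactorial n : ℂ) ≠ 0 := by
          rw [Nat.cast_ne_zero, Ne, Nat.descFactorial_eq_zero_iff_lt]; omega
        simp only [Finsupp.add_apply, Finsupp.tsub_apply, Finsupp.single_apply, one_mul,
          if_true, show ¬((0 : Fin 2) = 1) by decide, if_false, add_zero, zero_add, smul_eq_mul]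
        exact mul_ne_zero (scalar_ne d₁ d₂ n) (mul_ne_zero h1 h2)
      · intro i _ hi0
        have hz : (0 : ℕ).descFactorial i = 0 :=
          Nat.descFactorial_eq_zero_iff_lt.mpr (Nat.pos_of_ne_zero hi0)
        have hc : ((Finsupp.single 0 d₁ : Fin 2 →₀ ℕ)) 1 = 0 := by
          simp [Finsupp.single_apply]
        simp only [Dl_pow_monomial, hc, hz]
        simp

lemma psi_mem (d₁ d₂ n : ℕ) (hn : n ≤ min d₁ d₂) (f : P2) (hf : f ∈ Vd d₁) (g : P2)
    (hg : g ∈ Vd d₂) : ψ d₁ d₂ n f g ∈ Vd (d₁ + d₂ - 2 * n) := by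
  rw [ψ_eq]
  apply Submodule.smul_mem
  apply Submodule.sum_mem
  intro i hi
  apply Submodule.smul_mem
  have hin : i ≤ n := by simpa [Nat.lt_succ_iff] using hi
  have h1 : ((Dl 0 ^ (n - i)) ((Dl 1 ^ i) f)).IsHomogeneous (d₁ - i - (n - i)) :=
    isHom_pderiv_pow 0 (n - i) (isHom_pderiv_pow 1 i hf)
  have h2 : ((Dl 0 ^ i) ((Dl 1 ^ (n - i)) g)).IsHomogeneous (d₂ - (n - i) - i) :=
    isHom_pderiv_pow 0 i (isHom_pderiv_pow 1 (n - i) hg)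
  have := h1.mul h2
  rwa [show d₁ - i - (n - i) + (d₂ - (n - i) - i) = d₁ + d₂ - 2 * n by omega] at this

lemma psi_add_left (d₁ d₂ n : ℕ) (f f' g : P2) :
    ψ d₁ d₂ n (f + f') g = ψ d₁ d₂ n f g + ψ d₁ d₂ n f' g := by
  unfold ψ
  simp only [map_add, add_mul, smul_add, Finset.sum_add_distrib]

lemma psi_add_right (d₁ d₂ n : ℕ) (f g g' : P2) :
    ψ d₁ d₂ n f (g + g') = ψ d₁ d₂ n f g + ψ d₁ d₂ n f g' := by
  unfold ψ
  simp only [map_add, mul_add, smul_add, Finset.sum_add_distrib]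

lemma psi_smul_left (d₁ d₂ n : ℕ) (c : ℂ) (f g : P2) :
    ψ d₁ d₂ n (c • f) g = c • ψ d₁ d₂ n f g := by
  unfold ψ
  simp only [map_smul, smul_mul_assoc, smul_smul, Finset.smul_sum]
  refine Finset.sum_congr rfl fun i _ => ?_
  congr 1
  ring

lemma psi_smul_right (d₁ d₂ n : ℕ) (c : ℂ) (f g : P2) :
    ψ d₁ d₂ n f (c • g) = c • ψ d₁ d₂ n f g := by
  unfold ψ
  simp only [map_smul, mul_smul_comm, smul_smul, Finset.smul_sum]
  refine Finset.sum_congr rfl fun i _ => ?_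
  congr 1
  ring

lemma psi_equivariant (d₁ d₂ n : ℕ) (A : SL(2, ℂ)) (f g : P2) :
    ψ d₁ d₂ n (ρ A f) (ρ A g) = ρ A (ψ d₁ d₂ n f g) := by
  rw [ψ_eq, ψ_eq, Sn_equivariant, map_smul]

/-- The transvectant `ψ_n : V(d₁) × V(d₂) → V(d₁+d₂−2n)` is well defined, `ℂ`-bilinear,
`SL₂(ℂ)`-equivariant and onto. -/
theorem stmt12 (d₁ d₂ n : ℕ) (hn : n ≤ min d₁ d₂) :
    (∀ f ∈ Vd d₁, ∀ g ∈ Vd d₂, ψ d₁ d₂ n f g ∈ Vd (d₁ + d₂ - 2 * n)) ∧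
    (∀ f ∈ Vd d₁, ∀ f' ∈ Vd d₁, ∀ g ∈ Vd d₂,
      ψ d₁ d₂ n (f + f') g = ψ d₁ d₂ n f g + ψ d₁ d₂ n f' g) ∧
    (∀ (c : ℂ), ∀ f ∈ Vd d₁, ∀ g ∈ Vd d₂, ψ d₁ d₂ n (c • f) g = c • ψ d₁ d₂ n f g) ∧
    (∀ f ∈ Vd d₁, ∀ g ∈ Vd d₂, ∀ g' ∈ Vd d₂,
      ψ d₁ d₂ n f (g + g') = ψ d₁ d₂ n f g + ψ d₁ d₂ n f g') ∧
    (∀ (c : ℂ), ∀ f ∈ Vd d₁, ∀ g ∈ Vd d₂, ψ d₁ d₂ n f (c • g) = c • ψ d₁ d₂ n f g) ∧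
    (∀ A : SL(2, ℂ), ∀ f ∈ Vd d₁, ∀ g ∈ Vd d₂,
      ψ d₁ d₂ n (ρ A f) (ρ A g) = ρ A (ψ d₁ d₂ n f g)) ∧
    (Submodule.span ℂ {h : P2 | ∃ f ∈ Vd d₁, ∃ g ∈ Vd d₂, h = ψ d₁ d₂ n f g} =
      Vd (d₁ + d₂ - 2 * n)) := by
  refine ⟨psi_mem d₁ d₂ n hn, fun f _ f' _ g _ => psi_add_left d₁ d₂ n f f' g,
    fun c f _ g _ => psi_smul_left d₁ d₂ n c f g,
    fun f _ g _ g' _ => psi_add_right d₁ d₂ n f g g',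
    fun c f _ g _ => psi_smul_right d₁ d₂ n c f g,
    fun A f _ g _ => psi_equivariant d₁ d₂ n A f g, ?_⟩
  apply le_antisymm
  · rw [Submodule.span_le]
    rintro h ⟨f, hf, g, hg, rfl⟩
    exact psi_mem d₁ d₂ n hn f hf g hg
  · intro h hh
    rw [MvPolynomial.as_sum h]
    apply Submodule.sum_mem
    intro m hm
    have hdeg : m 0 + m 1 = d₁ + d₂ - 2 * n := by
      have h1 : Finsupp.degree m = d₁ + d₂ - 2 * n := by
        rw [Finsupp.degree_eq_weight_one]
        exact hh (MvPolynomial.mem_support_iff.mp hm)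
      rw [deg2] at h1
      exact h1
    obtain ⟨f, hf, g, hg, κ, hκ, hψ⟩ := exists_psi d₁ d₂ n (m 0) (m 1) hn hdeg
    have hm' : Finsupp.single 0 (m 0) + Finsupp.single 1 (m 1) = m := by
      apply ext2 <;> simp [Finsupp.add_apply, Finsupp.single_apply]
    have hgen : ψ d₁ d₂ n f g ∈
        Submodule.span ℂ {h : P2 | ∃ f ∈ Vd d₁, ∃ g ∈ Vd d₂, h = ψ d₁ d₂ n f g} :=
      Submodule.subset_span ⟨f, hf, g, hg, rfl⟩
    have hmono : monomial m κ ∈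
        Submodule.span ℂ {h : P2 | ∃ f ∈ Vd d₁, ∃ g ∈ Vd d₂, h = ψ d₁ d₂ n f g} := by
      rw [← hm', ← hψ]
      exact hgen
    have : (monomial m) (coeff m h) = (coeff m h / κ) • monomial m κ := by
      rw [smul_monomial, smul_eq_mul, div_mul_cancel₀ _ hκ]
    rw [this]
    exact Submodule.smul_mem _ _ hmono
end
end
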